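/- arXiv:1903.05300 — 3 statements merged into one kernel-verified Lean document; each statement's English description precedes it below -/
import Mathlib

section
/- Let A ⊂ ℤⁿ be a finite set with 0 in the interior of Q = conv(A), let F be a proper face of Q with A_F := A ∩ F nonempty, and let g : ℝⁿ∖{0} → ℝⁿ be continuous and positively homogeneous of degree 1 (g(t·p) = t·g(p) for t > 0) such that for every p ∈ cone(F) := {t·u : t > 0, u ∈ F} one has max_{α ∈ A∖A_F} ⟨α, g(p)⟩ < max_{β ∈ A_F} ⟨β, g(p)⟩. Let c : A → ℂ be coefficients with c_α ≠ 0 for all α and c_β a positive real number for every β ∈ A_F. Then there exist constants δ > 0 and C > 0 such that for every p ∈ cone(F) and every θ ∈ ℝⁿ with ⟨β, θ⟩ ∈ ℤ for all β ∈ A_F, the partial sum W_{A_F}(g(p), θ) = Σ_{β ∈ A_F} c_β · exp(⟨β, g(p)⟩) is a positive real number and |W(g(p), θ) − W_{A_F}(g(p), θ)| ≤ C · exp(−δ·‖p‖) · W_{A_F}(g(p), θ). -/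
attribute [local instance] Classical.propDecidable

noncomputable section

/-- The coercion of an integer vector to a real vector. -/
def toR {n : ℕ} (a : Fin n → ℤ) : Fin n → ℝ := fun i => (a i : ℝ)

/-- The pairing `⟨a, x⟩ = Σᵢ aᵢ xᵢ` of an integer vector with a real vector. -/
def dotZ {n : ℕ} (a : Fin n → ℤ) (x : Fin n → ℝ) : ℝ := ∑ i, (a i : ℝ) * x i

/-- `W_B(x, θ) = Σ_{α ∈ B} c_α · exp(⟨α, x⟩ + 2πi⟨α, θ⟩)`. -/
def Wpot {n : ℕ} (B : Finset (Fin n → ℤ)) (c : (Fin n → ℤ) → ℂ) (x θ : Fin n → ℝ) : ℂ :=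
  ∑ α ∈ B, c α * Complex.exp ((dotZ α x : ℂ) + 2 * (Real.pi : ℂ) * Complex.I * (dotZ α θ : ℂ))

/-- The open cone `{t·u : t > 0, u ∈ F}` over a set `F ⊆ ℝⁿ`. -/
def cone {n : ℕ} (F : Set (Fin n → ℝ)) : Set (Fin n → ℝ) :=
  {p | ∃ t : ℝ, 0 < t ∧ ∃ u ∈ F, p = t • u}

lemma dotZ_smul' {n : ℕ} (a : Fin n → ℤ) (t : ℝ) (x : Fin n → ℝ) :
    dotZ a (t • x) = t * dotZ a x := by
  unfold dotZ
  rw [Finset.mul_sum]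
  exact Finset.sum_congr rfl fun i _ => by simp [Pi.smul_apply, smul_eq_mul]; ring

lemma continuous_dotZ' {n : ℕ} (a : Fin n → ℤ) : Continuous (dotZ a) := by
  unfold dotZ
  exact continuous_finset_sum _ fun i _ => continuous_const.mul (continuous_apply i)

lemma re_aux' (d t : ℝ) : ((d : ℂ) + 2 * (Real.pi : ℂ) * Complex.I * (t : ℂ)).re = d := by
  simp

lemma exp_int' (d : ℝ) (m : ℤ) :
    Complex.exp ((d : ℂ) + 2 * (Real.pi : ℂ) * Complex.I * (m : ℂ)) = Complex.exp (d : ℂ) := by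
  rw [Complex.exp_add]
  have h : 2 * (Real.pi : ℂ) * Complex.I * (m : ℂ)
      = (m : ℂ) * (2 * (Real.pi : ℂ) * Complex.I) := by ring
  rw [h, Complex.exp_int_mul_two_pi_mul_I, mul_one]

lemma extreme_hull_subset {n : ℕ} {Q F : Set (Fin n → ℝ)} (hF : IsExtreme ℝ Q F)
    (hQconv : Convex ℝ Q)
    (S : Finset (Fin n → ℝ)) (hSQ : (S : Set (Fin n → ℝ)) ⊆ Q)
    (w : (Fin n → ℝ) → ℝ) (hw : ∀ y ∈ S, 0 < w y) (hw1 : ∑ y ∈ S, w y = 1)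
    {x : Fin n → ℝ} (hx : x ∈ F) (hxw : ∑ y ∈ S, w y • y = x) :
    convexHull ℝ (S : Set (Fin n → ℝ)) ⊆ F := by
  have hSne : S.Nonempty := by
    rcases S.eq_empty_or_nonempty with rfl | h
    · simp at hw1
    · exact h
  have hhQ : convexHull ℝ (S : Set (Fin n → ℝ)) ⊆ Q := convexHull_min hSQ hQconv
  intro y hy
  rw [Finset.convexHull_eq] at hy
  obtain ⟨μ, hμ0, hμ1, hμy⟩ := hy
  have hyeq : ∑ z ∈ S, μ z • z = y := by
    rw [← hμy, Finset.centerMass_eq_of_sum_1 _ _ hμ1]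
    rfl
  have hμle : ∀ z ∈ S, μ z ≤ 1 := by
    intro z hz
    calc μ z ≤ ∑ z ∈ S, μ z := Finset.single_le_sum (fun i hi => hμ0 i hi) hz
    _ = 1 := hμ1
  set m : ℝ := S.inf' hSne w with hm
  have hmpos : 0 < m := (Finset.lt_inf'_iff _).2 hw
  set ε : ℝ := m / 2 with hε
  have hεpos : 0 < ε := by positivity
  set w' : (Fin n → ℝ) → ℝ := fun z => w z + ε * (w z - μ z) with hw'
  have hw'0 : ∀ z ∈ S, 0 ≤ w' z := by
    intro z hz
    have h1 : m ≤ w z := Finset.inf'_le _ hz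
    have h2 : 0 ≤ μ z := hμ0 z hz
    have h3 : μ z ≤ 1 := hμle z hz
    simp only [hw']
    nlinarith
  have hw'1 : ∑ z ∈ S, w' z = 1 := by
    simp only [hw']
    rw [Finset.sum_add_distrib, hw1, ← Finset.mul_sum, Finset.sum_sub_distrib, hw1, hμ1]
    ring
  set z0 : Fin n → ℝ := ∑ z ∈ S, w' z • z with hz0
  have hz0mem : z0 ∈ convexHull ℝ (S : Set (Fin n → ℝ)) := by
    rw [Finset.convexHull_eq]
    refine ⟨w', hw'0, hw'1, ?_⟩
    rw [Finset.centerMass_eq_of_sum_1 _ _ hw'1]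
    rfl
  have hyQ : y ∈ Q := hhQ (by rw [Finset.convexHull_eq]; exact ⟨μ, hμ0, hμ1, hμy⟩)
  have hz0Q : z0 ∈ Q := hhQ hz0mem
  have hcomb : (ε / (1 + ε)) • y + (1 / (1 + ε)) • z0 = x := by
    rw [← hxw, ← hyeq, hz0, Finset.smul_sum, Finset.smul_sum, ← Finset.sum_add_distrib]
    refine Finset.sum_congr rfl fun z hz => ?_
    rw [smul_smul, smul_smul, ← add_smul]
    congr 1
    simp only [hw']
    field_simp
    ring
  have hseg : x ∈ openSegment ℝ y z0 :=
    ⟨ε / (1 + ε), 1 / (1 + ε), by positivity, by positivity, by field_simp; ring, hcomb⟩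
  exact hF.2 hyQ hz0Q hx hseg

lemma extreme_isCompact {n : ℕ} (A : Finset (Fin n → ℤ)) {F : Set (Fin n → ℝ)}
    (hF : IsExtreme ℝ (convexHull ℝ (toR '' (A : Set (Fin n → ℤ)))) F) :
    IsCompact F := by
  classical
  set V : Finset (Fin n → ℝ) := A.image toR with hV
  have hQV : toR '' (A : Set (Fin n → ℤ)) = (V : Set (Fin n → ℝ)) := by
    rw [hV, Finset.coe_image]
  rw [hQV] at hF
  set Q : Set (Fin n → ℝ) := convexHull ℝ (V : Set (Fin n → ℝ)) with hQ
  set 𝒮 : Finset (Finset (Fin n → ℝ)) :=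
    V.powerset.filter (fun S => convexHull ℝ (S : Set (Fin n → ℝ)) ⊆ F) with h𝒮
  have hFeq : F = ⋃ S ∈ 𝒮, convexHull ℝ (S : Set (Fin n → ℝ)) := by
    apply Set.Subset.antisymm
    · intro x hx
      have hxQ : x ∈ Q := hF.1 hx
      rw [hQ, Finset.convexHull_eq] at hxQ
      obtain ⟨w, hw0, hw1, hcm⟩ := hxQ
      have hxw : ∑ y ∈ V, w y • y = x := by
        rw [← hcm, Finset.centerMass_eq_of_sum_1 _ _ hw1]
        rfl
      set S : Finset (Fin n → ℝ) := V.filter (fun y => w y ≠ 0) with hS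
      have hsum : ∑ y ∈ S, w y = 1 := by
        rw [hS, Finset.sum_filter_ne_zero, hw1]
      have hvec : ∑ y ∈ S, w y • y = x := by
        rw [hS, Finset.sum_filter_of_ne, hxw]
        intro y _ hne hw0'
        exact hne (by rw [hw0', zero_smul])
      have hpos : ∀ y ∈ S, 0 < w y := by
        intro y hy
        rw [hS, Finset.mem_filter] at hy
        exact lt_of_le_of_ne (hw0 y hy.1) (Ne.symm hy.2)
      have hSQ : (S : Set (Fin n → ℝ)) ⊆ Q := by
        intro y hy
        exact subset_convexHull ℝ (V : Set (Fin n → ℝ))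
          (Finset.mem_coe.2 (Finset.filter_subset _ _ (Finset.mem_coe.1 hy)))
      have hhull : convexHull ℝ (S : Set (Fin n → ℝ)) ⊆ F :=
        extreme_hull_subset hF (convex_convexHull ℝ _) S hSQ w hpos hsum hx hvec
      have hxhull : x ∈ convexHull ℝ (S : Set (Fin n → ℝ)) := by
        rw [Finset.convexHull_eq]
        refine ⟨w, fun y hy => (hpos y hy).le, hsum, ?_⟩
        rw [Finset.centerMass_eq_of_sum_1 _ _ hsum]
        exact hvec
      have hSmem : S ∈ 𝒮 := by
        rw [h𝒮, Finset.mem_filter]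
        exact ⟨Finset.mem_powerset.2 (Finset.filter_subset _ _), hhull⟩
      exact Set.mem_biUnion hSmem hxhull
    · refine Set.iUnion₂_subset fun S hS => ?_
      rw [h𝒮, Finset.mem_filter] at hS
      exact hS.2
  rw [hFeq]
  exact 𝒮.isCompact_biUnion fun S _ => S.finite_toSet.isCompact_convexHull (𝕜 := ℝ)

/-- Let `A ⊂ ℤⁿ` be finite with `0` in the interior of `Q = conv(A)`,
`F` a proper face of `Q` with `A_F = A ∩ F` nonempty, and `g : ℝⁿ∖{0} → ℝⁿ` continuous
and positively homogeneous of degree 1 such that along `cone(F)` the exponents of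
`A∖A_F` are dominated: `max_{α ∈ A∖A_F}⟨α, g p⟩ < max_{β ∈ A_F}⟨β, g p⟩`.  If `c_α ≠ 0`
for all `α ∈ A` and `c_β` is a positive real for `β ∈ A_F`, then there are `δ, C > 0`
such that for all `p ∈ cone(F)` and all `θ` with `⟨β, θ⟩ ∈ ℤ` for every `β ∈ A_F`, the
partial sum `W_{A_F}(g p, θ)` is a positive real number and
`|W(g p, θ) − W_{A_F}(g p, θ)| ≤ C · exp(−δ‖p‖) · W_{A_F}(g p, θ)`. -/
theorem stmt_3 (n : ℕ) (hn : 1 ≤ n)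
    (A : Finset (Fin n → ℤ))
    (hQ : (0 : Fin n → ℝ) ∈ interior (convexHull ℝ (toR '' (A : Set (Fin n → ℤ)))))
    (F : Set (Fin n → ℝ))
    (hFface : IsExtreme ℝ (convexHull ℝ (toR '' (A : Set (Fin n → ℤ)))) F)
    (hFproper : F ≠ convexHull ℝ (toR '' (A : Set (Fin n → ℤ))))
    (hAF : (A.filter fun α => toR α ∈ F).Nonempty)
    (g : (Fin n → ℝ) → (Fin n → ℝ))
    (hgc : ContinuousOn g {p | p ≠ 0})
    (hgh : ∀ t : ℝ, 0 < t → ∀ p : Fin n → ℝ, p ≠ 0 → g (t • p) = t • g p)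
    (hgap : ∀ p ∈ cone F, ∀ α ∈ A \ (A.filter fun α => toR α ∈ F),
      dotZ α (g p) < (A.filter fun α => toR α ∈ F).sup' hAF fun β => dotZ β (g p))
    (c : (Fin n → ℤ) → ℂ)
    (hc : ∀ α ∈ A, c α ≠ 0)
    (hcF : ∀ β ∈ (A.filter fun α => toR α ∈ F), ∃ r : ℝ, 0 < r ∧ c β = (r : ℂ)) :
    ∃ δ : ℝ, 0 < δ ∧ ∃ C : ℝ, 0 < C ∧
      ∀ p ∈ cone F, ∀ θ : Fin n → ℝ,
        (∀ β ∈ (A.filter fun α => toR α ∈ F), ∃ m : ℤ, dotZ β θ = (m : ℝ)) →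
        (∃ r : ℝ, 0 < r ∧ Wpot (A.filter fun α => toR α ∈ F) c (g p) θ = (r : ℂ)) ∧
        ‖Wpot A c (g p) θ - Wpot (A.filter fun α => toR α ∈ F) c (g p) θ‖ ≤
          C * Real.exp (-δ * ‖p‖) *
            (Wpot (A.filter fun α => toR α ∈ F) c (g p) θ).re := by
  set AF : Finset (Fin n → ℤ) := A.filter (fun α => toR α ∈ F) with hAFdef
  set Q : Set (Fin n → ℝ) := convexHull ℝ (toR '' (A : Set (Fin n → ℤ))) with hQdef
  -- 0 is not in F
  have h0F : (0 : Fin n → ℝ) ∉ F := by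
    intro h0
    apply hFproper
    refine Set.Subset.antisymm hFface.1 fun y hyQ => ?_
    rcases eq_or_ne y 0 with rfl | hy0
    · exact h0
    · obtain ⟨rad, hrad, hball⟩ := Metric.mem_nhds_iff.1 (mem_interior_iff_mem_nhds.1 hQ)
      have hynorm : 0 < ‖y‖ := norm_pos_iff.2 hy0
      set ε : ℝ := rad / (2 * ‖y‖) with hε
      have hεpos : 0 < ε := by positivity
      have hzQ : -(ε • y) ∈ Q := by
        apply hball
        rw [Metric.mem_ball, dist_zero_right, norm_neg, norm_smul, Real.norm_eq_abs,
          abs_of_pos hεpos, hε]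
        rw [div_mul_eq_mul_div, div_lt_iff₀ (by positivity)]
        nlinarith
      have hseg : (0 : Fin n → ℝ) ∈ openSegment ℝ y (-(ε • y)) := by
        refine ⟨ε / (1 + ε), 1 / (1 + ε), by positivity, by positivity, by field_simp; ring, ?_⟩
        rw [smul_neg, smul_smul, ← sub_eq_add_neg, ← sub_smul]
        have h1 : ε / (1 + ε) - 1 / (1 + ε) * ε = 0 := by
          field_simp
          ring
        rw [h1, zero_smul]
      exact hFface.2 hyQ hzQ h0 hseg
  have hFcomp : IsCompact F := extreme_isCompact A hFface
  obtain ⟨β1, hβ1⟩ := hAF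
  have hβ1F : toR β1 ∈ F := (Finset.mem_filter.1 hβ1).2
  have hFne : F.Nonempty := ⟨toR β1, hβ1F⟩
  have hFnz : ∀ u ∈ F, u ≠ 0 := fun u hu h => h0F (h ▸ hu)
  have hAFne : AF.Nonempty := ⟨β1, hβ1⟩
  -- the normalized compact set K
  set nm : (Fin n → ℝ) → (Fin n → ℝ) := fun u => ‖u‖⁻¹ • u with hnm
  set K : Set (Fin n → ℝ) := nm '' F with hK
  have hKcomp : IsCompact K := by
    apply hFcomp.image_of_continuousOn
    refine ContinuousOn.smul (f := fun u : Fin n → ℝ => ‖u‖⁻¹) (g := fun u => u) ?_ ?_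
    · exact ((continuous_norm.continuousOn :
        ContinuousOn (fun u : Fin n → ℝ => ‖u‖) F)).inv₀
        fun u hu => norm_ne_zero_iff.2 (hFnz u hu)
    · exact continuousOn_id
  have hKnorm : ∀ q ∈ K, ‖q‖ = 1 := by
    rintro q ⟨u, hu, rfl⟩
    have h1 : ‖u‖ ≠ 0 := norm_ne_zero_iff.2 (hFnz u hu)
    simp only [hnm, norm_smul, Real.norm_eq_abs, abs_of_nonneg
      (inv_nonneg.2 (norm_nonneg u))]
    exact inv_mul_cancel₀ h1
  have hKne0 : ∀ q ∈ K, q ≠ 0 := by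
    intro q hq h
    have h1 := hKnorm q hq
    rw [h, norm_zero] at h1
    norm_num at h1
  have hKcone : K ⊆ cone F := by
    rintro q ⟨u, hu, rfl⟩
    exact ⟨‖u‖⁻¹, inv_pos.2 (norm_pos_iff.2 (hFnz u hu)), u, hu, rfl⟩
  have hKne : K.Nonempty := hFne.image _
  have hKsub : K ⊆ {p : Fin n → ℝ | p ≠ 0} := fun q hq => hKne0 q hq
  -- normalization of points of the cone
  have hconeK : ∀ p ∈ cone F, p ≠ 0 ∧ ‖p‖⁻¹ • p ∈ K := by
    rintro p ⟨t, ht, u, hu, rfl⟩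
    have hu0 : u ≠ 0 := hFnz u hu
    have hun : 0 < ‖u‖ := norm_pos_iff.2 hu0
    have hp0 : t • u ≠ 0 := smul_ne_zero (ne_of_gt ht) hu0
    refine ⟨hp0, ⟨u, hu, ?_⟩⟩
    rw [hnm, norm_smul, Real.norm_eq_abs, abs_of_pos ht, smul_smul]
    congr 1
    rw [mul_comm t ‖u‖, mul_inv, mul_assoc, inv_mul_cancel₀ (ne_of_gt ht), mul_one]
  -- positivity of the partial sum
  have hWAFeq : ∀ (x θ : Fin n → ℝ), (∀ β ∈ AF, ∃ m : ℤ, dotZ β θ = (m : ℝ)) →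
      Wpot AF c x θ = ((∑ β ∈ AF, (c β).re * Real.exp (dotZ β x) : ℝ) : ℂ) := by
    intro x θ hθ
    unfold Wpot
    push_cast
    refine Finset.sum_congr rfl fun β hβ => ?_
    obtain ⟨m, hm⟩ := hθ β hβ
    obtain ⟨rr, hrr, hcr⟩ := hcF β hβ
    have hre : (c β).re = rr := by rw [hcr]; exact Complex.ofReal_re rr
    rw [hm]
    push_cast
    rw [exp_int', hcr]
    norm_num
  have hrepos : ∀ β ∈ AF, 0 < (c β).re := by
    intro β hβ
    obtain ⟨rr, hrr, hcr⟩ := hcF β hβ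
    rw [hcr]
    simpa using hrr
  set m0 : ℝ := AF.inf' hAFne (fun β => (c β).re) with hm0
  have hm0pos : 0 < m0 := (Finset.lt_inf'_iff _).2 hrepos
  set Sabs : ℝ := ∑ α ∈ A, ‖c α‖ with hSabsdef
  have hSabs0 : 0 ≤ Sabs := Finset.sum_nonneg fun α _ => norm_nonneg _
  -- tail identity
  have htail : ∀ (x θ : Fin n → ℝ),
      Wpot A c x θ - Wpot AF c x θ = Wpot (A \ AF) c x θ := by
    intro x θ
    have h := Finset.sum_filter_add_sum_filter_not A (fun α => toR α ∈ F)
      (fun α => c α * Complex.exp ((dotZ α x : ℂ)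
        + 2 * (Real.pi : ℂ) * Complex.I * (dotZ α θ : ℂ)))
    rw [Finset.filter_not] at h
    unfold Wpot
    rw [← h]
    ring
  by_cases hE : (A \ AF).Nonempty
  · -- nontrivial tail: use compactness to get a uniform gap δ
    set Φ : (Fin n → ℝ) → ℝ := fun q =>
      (AF.sup' hAFne fun β => dotZ β (g q)) - ((A \ AF).sup' hE fun α => dotZ α (g q)) with hΦ
    have hΦcont : ContinuousOn Φ K := by
      apply ContinuousOn.sub
      · exact ContinuousOn.finset_sup'_apply hAFne fun β _ =>
          (continuous_dotZ' β).comp_continuousOn (hgc.mono hKsub)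
      · exact ContinuousOn.finset_sup'_apply hE fun α _ =>
          (continuous_dotZ' α).comp_continuousOn (hgc.mono hKsub)
    obtain ⟨q0, hq0K, hq0min⟩ := hKcomp.exists_isMinOn hKne hΦcont
    set δ : ℝ := Φ q0 with hδdef
    have hδpos : 0 < δ := by
      have h := (Finset.sup'_lt_iff hE).2 fun α hα => hgap q0 (hKcone hq0K) α hα
      have h2 : ((A \ AF).sup' hE fun α => dotZ α (g q0)) <
          AF.sup' hAFne fun β => dotZ β (g q0) := h
      rw [hδdef, hΦ]
      exact sub_pos.2 h2
    refine ⟨δ, hδpos, Sabs / m0 + 1, by positivity, ?_⟩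
    intro p hp θ hθ
    set r : ℝ := ∑ β ∈ AF, (c β).re * Real.exp (dotZ β (g p)) with hrdef
    have hWeq := hWAFeq (g p) θ hθ
    have hterm : ∀ β ∈ AF, 0 < (c β).re * Real.exp (dotZ β (g p)) :=
      fun β hβ => mul_pos (hrepos β hβ) (Real.exp_pos _)
    have hrpos : 0 < r := Finset.sum_pos hterm hAFne
    have hre : (Wpot AF c (g p) θ).re = r := by rw [hWeq]; exact Complex.ofReal_re _
    refine ⟨⟨r, hrpos, hWeq⟩, ?_⟩
    rw [hre, htail]
    obtain ⟨hp0, hqK⟩ := hconeK p hp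
    have hpn : 0 < ‖p‖ := norm_pos_iff.2 hp0
    set q : Fin n → ℝ := ‖p‖⁻¹ • p with hqdef
    have hq0' : q ≠ 0 := hKne0 q hqK
    have hgpq : g p = ‖p‖ • g q := by
      have h1 : ‖p‖ • q = p := by
        rw [hqdef, smul_smul, mul_inv_cancel₀ (ne_of_gt hpn), one_smul]
      conv_lhs => rw [← h1]
      rw [hgh ‖p‖ hpn q hq0']
    obtain ⟨β0, hβ0AF, hβ0eq⟩ := Finset.exists_mem_eq_sup' hAFne (fun β => dotZ β (g q))
    set Mh : ℝ := dotZ β0 (g q) with hMhdef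
    have hδle : δ ≤ Φ q := isMinOn_iff.1 hq0min q hqK
    have hΦq : Φ q = Mh - (A \ AF).sup' hE (fun α => dotZ α (g q)) := by
      rw [hΦ]
      simp only
      rw [hβ0eq]
    have hαbd : ∀ α ∈ A \ AF, dotZ α (g p) ≤ ‖p‖ * Mh - δ * ‖p‖ := by
      intro α hα
      have h1 : dotZ α (g q) ≤ (A \ AF).sup' hE (fun α => dotZ α (g q)) := by
        exact Finset.le_sup' (fun α => dotZ α (g q)) hα
      have h3 : dotZ α (g q) ≤ Mh - δ := by
        rw [hΦq] at hδle
        linarith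
      calc dotZ α (g p) = ‖p‖ * dotZ α (g q) := by rw [hgpq, dotZ_smul']
      _ ≤ ‖p‖ * (Mh - δ) := mul_le_mul_of_nonneg_left h3 (norm_nonneg p)
      _ = ‖p‖ * Mh - δ * ‖p‖ := by ring
    have hrlb : m0 * Real.exp (‖p‖ * Mh) ≤ r := by
      have h1 : (c β0).re * Real.exp (dotZ β0 (g p)) ≤ r :=
        Finset.single_le_sum (fun β hβ => (hterm β hβ).le) hβ0AF
      have h2 : dotZ β0 (g p) = ‖p‖ * Mh := by rw [hgpq, dotZ_smul']
      have h3 : m0 ≤ (c β0).re := Finset.inf'_le _ hβ0AF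
      rw [h2] at h1
      nlinarith [Real.exp_pos (‖p‖ * Mh)]
    have htb : ‖Wpot (A \ AF) c (g p) θ‖ ≤
        Sabs * (Real.exp (‖p‖ * Mh) * Real.exp (-δ * ‖p‖)) := by
      unfold Wpot
      refine le_trans (norm_sum_le _ _) ?_
      have hbd : ∀ α ∈ A \ AF,
          ‖c α * Complex.exp ((dotZ α (g p) : ℂ)
            + 2 * (Real.pi : ℂ) * Complex.I * (dotZ α θ : ℂ))‖
          ≤ ‖c α‖ * (Real.exp (‖p‖ * Mh) * Real.exp (-δ * ‖p‖)) := by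
        intro α hα
        rw [norm_mul, Complex.norm_exp, re_aux']
        refine mul_le_mul_of_nonneg_left ?_ (norm_nonneg _)
        rw [← Real.exp_add]
        exact Real.exp_le_exp.2 (by linarith [hαbd α hα])
      calc ∑ α ∈ A \ AF, ‖c α * Complex.exp ((dotZ α (g p) : ℂ)
            + 2 * (Real.pi : ℂ) * Complex.I * (dotZ α θ : ℂ))‖
          ≤ ∑ α ∈ A \ AF, ‖c α‖
            * (Real.exp (‖p‖ * Mh) * Real.exp (-δ * ‖p‖)) := Finset.sum_le_sum hbd
      _ ≤ ∑ α ∈ A, ‖c α‖ * (Real.exp (‖p‖ * Mh) * Real.exp (-δ * ‖p‖)) := by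
          refine Finset.sum_le_sum_of_subset_of_nonneg (Finset.sdiff_subset) ?_
          intro α _ _
          positivity
      _ = Sabs * (Real.exp (‖p‖ * Mh) * Real.exp (-δ * ‖p‖)) := by
          rw [hSabsdef, Finset.sum_mul]
    refine le_trans htb ?_
    have hX : 0 < Real.exp (-δ * ‖p‖) := Real.exp_pos _
    have hEp : 0 < Real.exp (‖p‖ * Mh) := Real.exp_pos _
    have hSle : Sabs ≤ (Sabs / m0 + 1) * m0 := by
      rw [add_mul, div_mul_cancel₀ _ (ne_of_gt hm0pos)]
      nlinarith
    calc Sabs * (Real.exp (‖p‖ * Mh) * Real.exp (-δ * ‖p‖))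
        ≤ ((Sabs / m0 + 1) * m0) * (Real.exp (‖p‖ * Mh) * Real.exp (-δ * ‖p‖)) :=
          mul_le_mul_of_nonneg_right hSle (by positivity)
    _ = (Sabs / m0 + 1) * Real.exp (-δ * ‖p‖) * (m0 * Real.exp (‖p‖ * Mh)) := by ring
    _ ≤ (Sabs / m0 + 1) * Real.exp (-δ * ‖p‖) * r := by
        refine mul_le_mul_of_nonneg_left hrlb ?_
        positivity
  · -- no tail at all
    refine ⟨1, one_pos, 1, one_pos, ?_⟩
    intro p hp θ hθ
    set r : ℝ := ∑ β ∈ AF, (c β).re * Real.exp (dotZ β (g p)) with hrdef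
    have hWeq := hWAFeq (g p) θ hθ
    have hterm : ∀ β ∈ AF, 0 < (c β).re * Real.exp (dotZ β (g p)) :=
      fun β hβ => mul_pos (hrepos β hβ) (Real.exp_pos _)
    have hrpos : 0 < r := Finset.sum_pos hterm hAFne
    have hre : (Wpot AF c (g p) θ).re = r := by rw [hWeq]; exact Complex.ofReal_re _
    refine ⟨⟨r, hrpos, hWeq⟩, ?_⟩
    rw [hre, htail]
    have hempty : A \ AF = ∅ := Finset.not_nonempty_iff_eq_empty.1 hE
    rw [hempty]
    unfold Wpot
    rw [Finset.sum_empty, norm_zero]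
    exact mul_nonneg (mul_nonneg zero_le_one (Real.exp_pos _).le) hrpos.le

end
end

section
/- Let A ⊂ ℤⁿ be a finite set with 0 in the interior of Q = conv(A), let F be a proper face of Q with A_F := A ∩ F nonempty, let g : ℝⁿ∖{0} → ℝⁿ be continuous and positively homogeneous of degree 1 such that for every p ∈ cone(F) one has max_{α ∈ A∖A_F} ⟨α, g(p)⟩ < max_{β ∈ A_F} ⟨β, g(p)⟩, and let c : A → ℂ with c_α ≠ 0 for all α. Then there exist δ > 0, C > 0, and an open set V ⊆ (ℝⁿ∖{0}) × ℝⁿ which is conical in the first variable (i.e. (p, θ) ∈ V and t > 0 imply (t·p, θ) ∈ V) and contains Λ_F := {(p, θ) : p ∈ cone(F), ⟨β, θ⟩ ∈ ℤ for all β ∈ A_F}, such that for every (p, θ) ∈ V: |W(g(p), θ) − W_{A_F}(g(p), θ)| ≤ C · exp(−δ·‖p‖) · Σ_{β ∈ A_F} |c_β| · exp(⟨β, g(p)⟩). -/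
attribute [local instance] Classical.propDecidable

noncomputable section

/-- An extreme subset absorbs positive convex combinations. -/
lemma extreme_absorb {E : Type*} [AddCommGroup E] [Module ℝ E] {Q F : Set E}
    (hQconv : Convex ℝ Q) (hX : IsExtreme ℝ Q F) (s : Finset E) :
    ↑s ⊆ Q → ∀ w : E → ℝ, (∀ y ∈ s, 0 < w y) → (∑ y ∈ s, w y) = 1 →
      ∀ x ∈ F, (∑ y ∈ s, w y • y) = x → ∀ y ∈ s, y ∈ F := by
  induction s using Finset.induction_on with
  | empty => intro _ _ _ _ _ _ _ y hy; exact absurd hy (Finset.notMem_empty y)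
  | insert _ _ ha _ =>
    rename_i a s ih
    intro hsQ w hw hsum x hxF hvec y hy
    by_cases hs : s.Nonempty
    · -- b = sum over s
      have hb : 0 < ∑ z ∈ s, w z :=
        Finset.sum_pos (fun z hz => hw z (Finset.mem_insert_of_mem hz)) hs
      set b := ∑ z ∈ s, w z with hbdef
      have hab : w a + b = 1 := by rwa [Finset.sum_insert ha] at hsum
      have hwa : 0 < w a := hw a (Finset.mem_insert_self a s)
      -- the point z
      set z := s.centerMass w id with hzdef
      have hzQ : z ∈ Q := hQconv.centerMass_mem
        (fun i hi => (hw i (Finset.mem_insert_of_mem hi)).le) hb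
        (fun i hi => hsQ (Finset.mem_coe.2 (Finset.mem_insert_of_mem hi)))
      have haQ : a ∈ Q := hsQ (by simp)
      have hbz : b • z = ∑ y ∈ s, w y • y := by
        rw [hzdef, Finset.centerMass, smul_smul, mul_inv_cancel₀ hb.ne', one_smul]
        simp [id]
      have hseg : x ∈ openSegment ℝ a z := by
        refine ⟨w a, b, hwa, hb, hab, ?_⟩
        rw [hbz, ← hvec, Finset.sum_insert ha]
      obtain ⟨haF, hzF⟩ := And.intro (hX.2 haQ hzQ hxF hseg) (hX.right_mem_of_mem_openSegment haQ hzQ hxF hseg)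
      rcases Finset.mem_insert.1 hy with rfl | hy'
      · exact haF
      · refine ih (fun u hu => hsQ (Finset.mem_coe.2 (Finset.mem_insert_of_mem (Finset.mem_coe.1 hu))))
          (fun u => b⁻¹ * w u)
          (fun u hu => mul_pos (inv_pos.2 hb) (hw u (Finset.mem_insert_of_mem hu)))
          ?_ z hzF ?_ y hy'
        · rw [← Finset.mul_sum, ← hbdef, inv_mul_cancel₀ hb.ne']
        · rw [hzdef, Finset.centerMass]
          simp only [id, Finset.smul_sum, smul_smul, ← hbdef]
    · -- s empty
      simp only [Finset.not_nonempty_iff_eq_empty] at hs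
      subst hs
      simp only [Finset.sum_insert (Finset.notMem_empty a), Finset.sum_empty, add_zero] at hsum hvec
      have : a = x := by rw [hsum, one_smul] at hvec; exact hvec
      rcases Finset.mem_insert.1 hy with rfl | hy'
      · rwa [this]
      · exact absurd hy' (Finset.notMem_empty y)

/-- An extreme subset of the convex hull of a finite set is contained in the convex hull
of the points of the finite set that lie in it. -/
lemma extreme_subset_hull {E : Type*} [AddCommGroup E] [Module ℝ E] {F : Set E}
    (A' : Finset E) (hX : IsExtreme ℝ (convexHull ℝ (A' : Set E)) F) :
    F ⊆ convexHull ℝ ((A'.filter (· ∈ F) : Finset E) : Set E) := by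
  intro x hxF
  have hxQ : x ∈ convexHull ℝ (A' : Set E) := hX.1 hxF
  obtain ⟨w, hw0, hw1, hwx⟩ := Finset.mem_convexHull'.1 hxQ
  set s : Finset E := A'.filter (fun y => 0 < w y) with hsdef
  have hsub : s ⊆ A' := Finset.filter_subset _ _
  have hsum1 : (∑ y ∈ s, w y) = 1 := by
    rw [hsdef]
    rw [Finset.sum_filter_of_ne (fun y hy hne => lt_of_le_of_ne (hw0 y hy) (Ne.symm hne))]
    exact hw1
  have hvec : (∑ y ∈ s, w y • y) = x := by
    rw [hsdef]
    rw [Finset.sum_filter_of_ne]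
    · exact hwx
    · intro y hy hne
      rcases (hw0 y hy).lt_or_eq with h | h
      · exact h
      · exact absurd (by rw [← h, zero_smul]) hne
  have habs : ∀ y ∈ s, y ∈ F :=
    extreme_absorb (convex_convexHull ℝ _) hX s
      (fun y hy => subset_convexHull ℝ _ (hsub (Finset.mem_coe.1 hy)))
      w (fun y hy => (Finset.mem_filter.1 hy).2) hsum1 x hxF hvec
  have hsT : (s : Set E) ⊆ ((A'.filter (· ∈ F) : Finset E) : Set E) := by
    intro y hy
    have hy' := Finset.mem_coe.1 hy
    exact Finset.mem_coe.2 (Finset.mem_filter.2 ⟨hsub hy', habs y hy'⟩)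
  have : x ∈ convexHull ℝ (s : Set E) := by
    rw [← hvec]
    have hid : (∑ y ∈ s, w y • y) = s.centerMass w id := by
      rw [Finset.centerMass_eq_of_sum_1 _ id hsum1]; rfl
    rw [hid]
    exact s.centerMass_mem_convexHull (fun y hy => (Finset.mem_filter.1 hy).2.le)
      (hsum1 ▸ one_pos) (fun y hy => Finset.mem_coe.2 hy)
  exact (convexHull_mono hsT) this

/-- A proper extreme subset avoids the interior. -/
lemma extreme_notMem_interior {E : Type*} [NormedAddCommGroup E] [NormedSpace ℝ E]
    {Q F : Set E} (hX : IsExtreme ℝ Q F) (hne : F ≠ Q) :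
    ∀ w ∈ F, w ∉ interior Q := by
  intro w hwF hwInt
  apply hne
  refine Set.Subset.antisymm hX.1 ?_
  intro x hxQ
  by_cases hxw : x = w
  · rwa [hxw]
  obtain ⟨ε, hε, hball⟩ := Metric.mem_nhds_iff.1 (mem_interior_iff_mem_nhds.1 hwInt)
  set d : ℝ := ‖w - x‖ with hd
  have hdpos : 0 < d := by
    rw [hd, norm_sub_pos_iff]
    exact fun h => hxw h.symm
  set ε' : ℝ := ε / (2 * (d + 1)) with hε'
  have hε'pos : 0 < ε' := by positivity
  have h1 : (0:ℝ) < 1 + ε' := by positivity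
  set y : E := (1 + ε') • w - ε' • x with hy
  have hyball : y ∈ Metric.ball w ε := by
    rw [Metric.mem_ball, dist_eq_norm]
    have : y - w = ε' • (w - x) := by
      rw [hy]; module
    rw [this, norm_smul, Real.norm_eq_abs, abs_of_pos hε'pos, ← hd]
    calc ε' * d < ε' * (2 * (d+1)) := by
            apply mul_lt_mul_of_pos_left _ hε'pos
            nlinarith
      _ = ε * (d+1) / (d+1) := by rw [hε']; field_simp
      _ = ε := by field_simp
  have hyQ : y ∈ Q := hball hyball
  have hseg : w ∈ openSegment ℝ x y := by
    refine ⟨ε' / (1 + ε'), 1 / (1 + ε'), by positivity, by positivity, by rw [← add_div, div_eq_one_iff_eq h1.ne']; ring, ?_⟩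
    rw [hy]
    match_scalars <;> field_simp <;> ring
  exact hX.2 hxQ hyQ hwF hseg

set_option maxHeartbeats 1000000 in
/-- With `A`, `Q = conv(A)`, a proper face `F` with `A_F ≠ ∅`, and a
homogeneous continuous `g` dominating the `A∖A_F`-exponents along `cone(F)` as before,
and arbitrary nonzero coefficients `c_α`, there exist `δ, C > 0` and an open set
`V ⊆ (ℝⁿ∖{0}) × ℝⁿ`, conical in the first variable and containing
`Λ_F = {(p,θ) : p ∈ cone(F), ⟨β,θ⟩ ∈ ℤ ∀ β ∈ A_F}`, such that on all of `V`:
`|W(g p, θ) − W_{A_F}(g p, θ)| ≤ C · exp(−δ‖p‖) · Σ_{β ∈ A_F} |c_β| exp(⟨β, g p⟩)`. -/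
theorem stmt_4 (n : ℕ) (hn : 1 ≤ n)
    (A : Finset (Fin n → ℤ))
    (hQ : (0 : Fin n → ℝ) ∈ interior (convexHull ℝ (toR '' (A : Set (Fin n → ℤ)))))
    (F : Set (Fin n → ℝ))
    (hFface : IsExtreme ℝ (convexHull ℝ (toR '' (A : Set (Fin n → ℤ)))) F)
    (hFproper : F ≠ convexHull ℝ (toR '' (A : Set (Fin n → ℤ))))
    (hAF : (A.filter fun α => toR α ∈ F).Nonempty)
    (g : (Fin n → ℝ) → (Fin n → ℝ))
    (hgc : ContinuousOn g {p | p ≠ 0})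
    (hgh : ∀ t : ℝ, 0 < t → ∀ p : Fin n → ℝ, p ≠ 0 → g (t • p) = t • g p)
    (hgap : ∀ p ∈ cone F, ∀ α ∈ A \ (A.filter fun α => toR α ∈ F),
      dotZ α (g p) < (A.filter fun α => toR α ∈ F).sup' hAF fun β => dotZ β (g p))
    (c : (Fin n → ℤ) → ℂ)
    (hc : ∀ α ∈ A, c α ≠ 0) :
    ∃ δ : ℝ, 0 < δ ∧ ∃ C : ℝ, 0 < C ∧
      ∃ V : Set ((Fin n → ℝ) × (Fin n → ℝ)), IsOpen V ∧
        (∀ q ∈ V, q.1 ≠ 0) ∧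
        (∀ q ∈ V, ∀ t : ℝ, 0 < t → (t • q.1, q.2) ∈ V) ∧
        {q : (Fin n → ℝ) × (Fin n → ℝ) | q.1 ∈ cone F ∧
          ∀ β ∈ (A.filter fun α => toR α ∈ F), ∃ m : ℤ, dotZ β q.2 = (m : ℝ)} ⊆ V ∧
        ∀ q ∈ V,
          ‖Wpot A c (g q.1) q.2 -
              Wpot (A.filter fun α => toR α ∈ F) c (g q.1) q.2‖ ≤
            C * Real.exp (-δ * ‖q.1‖) *
              ∑ β ∈ A.filter fun α => toR α ∈ F,
                ‖c β‖ * Real.exp (dotZ β (g q.1)) := by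
  classical
  set Qs : Set (Fin n → ℝ) := convexHull ℝ (toR '' (A : Set (Fin n → ℤ))) with hQsdef
  set AF : Finset (Fin n → ℤ) := A.filter (fun α => toR α ∈ F) with hAFdef
  -- basic continuity facts
  have hopen0 : IsOpen {p : Fin n → ℝ | p ≠ 0} := isOpen_ne
  have hdotc : ∀ a : Fin n → ℤ, Continuous (dotZ a) := by
    intro a
    exact continuous_finset_sum _ (fun i _ => continuous_const.mul (continuous_apply i))
  have hdotsmul : ∀ (a : Fin n → ℤ) (t : ℝ) (x : Fin n → ℝ), dotZ a (t • x) = t * dotZ a x := by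
    intro a t x
    unfold dotZ
    rw [Finset.mul_sum]
    refine Finset.sum_congr rfl fun i _ => ?_
    simp [Pi.smul_apply, smul_eq_mul]; ring
  have hgat : ∀ p : Fin n → ℝ, p ≠ 0 → ContinuousAt g p := fun p hp =>
    hgc.continuousAt (hopen0.mem_nhds hp)
  -- F avoids 0 and small balls
  have hnotint : ∀ w ∈ F, w ∉ interior Qs := extreme_notMem_interior hFface hFproper
  have h0F : (0 : Fin n → ℝ) ∉ F := fun h => hnotint 0 h hQ
  have hconene : ∀ p ∈ cone F, p ≠ 0 := by
    rintro p ⟨t, ht, u, huF, rfl⟩ h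
    rcases smul_eq_zero.1 h with h | h
    · exact ht.ne' h
    · exact h0F (h ▸ huF)
  have hconesmul : ∀ p ∈ cone F, ∀ t : ℝ, 0 < t → t • p ∈ cone F := by
    rintro p ⟨s, hs, u, huF, rfl⟩ t ht
    exact ⟨t * s, mul_pos ht hs, u, huF, smul_smul t s u⟩
  obtain ⟨r, hr, hrF⟩ : ∃ r > 0, ∀ w ∈ F, r ≤ ‖w‖ := by
    obtain ⟨ε, hε, hball⟩ := Metric.mem_nhds_iff.1 (mem_interior_iff_mem_nhds.1 hQ)
    refine ⟨ε, hε, fun w hwF => ?_⟩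
    by_contra hlt
    push_neg at hlt
    exact hnotint w hwF (interior_maximal hball Metric.isOpen_ball (mem_ball_zero_iff.2 hlt))
  -- T and the hull fact
  set T : Finset (Fin n → ℝ) := AF.image toR with hTdef
  have hcoeA : (convexHull ℝ (((A.image toR) : Finset (Fin n → ℝ)) : Set (Fin n → ℝ))) = Qs := by
    rw [Finset.coe_image]
  have hFT : F ⊆ convexHull ℝ (T : Set (Fin n → ℝ)) := by
    have h1 := extreme_subset_hull (A.image toR) (by rw [hcoeA]; exact hFface)
    have h2 : (A.image toR).filter (· ∈ F) = T := by
      rw [hTdef, hAFdef, Finset.filter_image]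
    rwa [h2] at h1
  have hTQ : (T : Set (Fin n → ℝ)) ⊆ Qs := by
    intro y hy
    obtain ⟨α, hα, rfl⟩ := Finset.mem_image.1 (Finset.mem_coe.1 hy)
    exact subset_convexHull ℝ _ ⟨α, Finset.mem_coe.2 (Finset.filter_subset _ _ hα), rfl⟩
  have hhullTQ : convexHull ℝ (T : Set (Fin n → ℝ)) ⊆ Qs :=
    convexHull_min hTQ (convex_convexHull ℝ _)
  have hTF : ∀ y ∈ T, y ∈ F := by
    intro y hy
    obtain ⟨α, hα, rfl⟩ := Finset.mem_image.1 hy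
    exact (Finset.mem_filter.1 hα).2
  by_cases hAc : (A \ AF).Nonempty
  swap
  · -- no exponents outside the face: the difference vanishes
    have hAeq : AF = A := by
      rw [Finset.not_nonempty_iff_eq_empty, Finset.sdiff_eq_empty_iff_subset] at hAc
      exact Finset.Subset.antisymm (Finset.filter_subset _ _) hAc
    refine ⟨1, one_pos, 1, one_pos, {q | q.1 ≠ 0}, ?_, fun q hq => hq, ?_, ?_, ?_⟩
    · exact hopen0.preimage continuous_fst
    · intro q hq t ht
      exact smul_ne_zero ht.ne' hq
    · intro q hq
      exact hconene q.1 hq.1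
    · intro q hq
      rw [hAeq, sub_self]
      simp only [norm_zero]
      have h1 : (0:ℝ) ≤ Real.exp (-1 * ‖q.1‖) := (Real.exp_pos _).le
      have h2 : (0:ℝ) ≤ ∑ β ∈ A, ‖c β‖ * Real.exp (dotZ β (g q.1)) :=
        Finset.sum_nonneg fun β _ => mul_nonneg (norm_nonneg _) (Real.exp_pos _).le
      nlinarith
  -- main case
  set M : (Fin n → ℝ) → ℝ := fun p => AF.sup' hAF fun β => dotZ β (g p) with hMdef
  set N : (Fin n → ℝ) → ℝ := fun p => (A \ AF).sup' hAc fun α => dotZ α (g p) with hNdef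
  have hMh : ∀ t : ℝ, 0 < t → ∀ p : Fin n → ℝ, p ≠ 0 → M (t • p) = t * M p := by
    intro t ht p hp
    rw [hMdef]
    simp only
    rw [hgh t ht p hp]
    rw [Finset.comp_sup'_eq_sup'_comp hAF (fun x : ℝ => t * x)
      (fun x y => mul_max_of_nonneg x y ht.le)]
    refine Finset.sup'_congr hAF rfl fun β _ => ?_
    simp [Function.comp, hdotsmul]
  have hNh : ∀ t : ℝ, 0 < t → ∀ p : Fin n → ℝ, p ≠ 0 → N (t • p) = t * N p := by
    intro t ht p hp
    rw [hNdef]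
    simp only
    rw [hgh t ht p hp]
    rw [Finset.comp_sup'_eq_sup'_comp hAc (fun x : ℝ => t * x)
      (fun x y => mul_max_of_nonneg x y ht.le)]
    refine Finset.sup'_congr hAc rfl fun β _ => ?_
    simp [Function.comp, hdotsmul]
  have hMcont : ∀ p : Fin n → ℝ, p ≠ 0 → ContinuousAt M p := by
    intro p hp
    exact ContinuousAt.finset_sup'_apply hAF fun β _ =>
      ((hdotc β).continuousAt).comp (hgat p hp)
  have hNcont : ∀ p : Fin n → ℝ, p ≠ 0 → ContinuousAt N p := by
    intro p hp
    exact ContinuousAt.finset_sup'_apply hAc fun β _ =>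
      ((hdotc β).continuousAt).comp (hgat p hp)
  have hgap' : ∀ p ∈ cone F, N p < M p := by
    intro p hp
    rw [hNdef]
    exact (Finset.sup'_lt_iff hAc).2 fun α hα => hgap p hp α hα
  have hlamIcc0 : True := trivial
  obtain ⟨δ, hδ, hKEY⟩ : ∃ δ : ℝ, 0 < δ ∧ ∀ p ∈ cone F, N p + δ * ‖p‖ < M p := by
    by_contra hcon
    push_neg at hcon
    have hseq : ∀ k : ℕ, ∃ p, p ∈ cone F ∧ M p ≤ N p + (1/(k+1 : ℝ)) * ‖p‖ := by
      intro k
      obtain ⟨p, hp, hle⟩ := hcon (1/(k+1 : ℝ)) (by positivity)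
      exact ⟨p, hp, hle⟩
    choose p hpF hple using hseq
    have hpne : ∀ k, p k ≠ 0 := fun k => hconene _ (hpF k)
    have hnp : ∀ k, 0 < ‖p k‖ := fun k => norm_pos_iff.2 (hpne k)
    set u : ℕ → (Fin n → ℝ) := fun k => ‖p k‖⁻¹ • p k with hudef
    have huF : ∀ k, u k ∈ cone F := fun k => hconesmul _ (hpF k) _ (inv_pos.2 (hnp k))
    have hun : ∀ k, ‖u k‖ = 1 := by
      intro k
      rw [hudef]
      simp only [norm_smul, Real.norm_eq_abs, abs_of_pos (inv_pos.2 (hnp k))]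
      exact inv_mul_cancel₀ (hnp k).ne'
    have hule : ∀ k, M (u k) ≤ N (u k) + 1/(k+1 : ℝ) := by
      intro k
      have h2 : M (u k) = ‖p k‖⁻¹ * M (p k) := hMh _ (inv_pos.2 (hnp k)) _ (hpne k)
      have h3 : N (u k) = ‖p k‖⁻¹ * N (p k) := hNh _ (inv_pos.2 (hnp k)) _ (hpne k)
      have h4 := mul_le_mul_of_nonneg_left (hple k) (inv_pos.2 (hnp k)).le
      rw [h2, h3]
      have h5 : ‖p k‖⁻¹ * (N (p k) + 1/(k+1 : ℝ) * ‖p k‖)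
          = ‖p k‖⁻¹ * N (p k) + 1/(k+1 : ℝ) * (‖p k‖⁻¹ * ‖p k‖) := by ring
      rw [inv_mul_cancel₀ (hnp k).ne', mul_one] at h5
      linarith [h4, h5.symm.le, h5.le]
    -- unpack cone membership
    choose t ht w hwF hueq using huF
    have hwhull : ∀ k, w k ∈ convexHull ℝ (T : Set (Fin n → ℝ)) := fun k => hFT (hwF k)
    have hwrep : ∀ k : ℕ, ∃ ω : (Fin n → ℝ) → ℝ, (∀ y ∈ T, 0 ≤ ω y) ∧
        (∑ y ∈ T, ω y) = 1 ∧ (∑ y ∈ T, ω y • y) = w k :=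
      fun k => Finset.mem_convexHull'.1 (hwhull k)
    choose ω hω0 hω1 hωvec using hwrep
    set lam : ℕ → ({y // y ∈ T} → ℝ) := fun k y => ω k ↑y with hlamdef
    set K : Set ({y // y ∈ T} → ℝ) := Set.univ.pi fun _ => Set.Icc (0:ℝ) 1 with hKdef
    have hKcomp : IsCompact K := isCompact_univ_pi fun _ => isCompact_Icc
    have hlamK : ∀ k, lam k ∈ K := by
      intro k
      rw [hKdef, Set.mem_univ_pi]
      intro y
      refine ⟨hω0 k _ y.2, ?_⟩
      calc ω k ↑y ≤ ∑ z ∈ T, ω k z := Finset.single_le_sum (fun z hz => hω0 k z hz) y.2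
        _ = 1 := hω1 k
    obtain ⟨laminf, hlaminfK, φ, hφmono, hφtend⟩ := hKcomp.tendsto_subseq hlamK
    set cm : ({y // y ∈ T} → ℝ) → (Fin n → ℝ) :=
      fun μ => ∑ y ∈ T.attach, μ y • (y : Fin n → ℝ) with hcmdef
    have hcmcont : Continuous cm :=
      continuous_finset_sum _ fun y _ => (continuous_apply y).smul continuous_const
    have hcmw : ∀ k, cm (lam k) = w k := by
      intro k
      rw [hcmdef]
      simp only [hlamdef]
      rw [Finset.sum_attach T (fun y => ω k y • y)]
      exact hωvec k
    set wbar : Fin n → ℝ := cm laminf with hwbardef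
    have hwtend : Filter.Tendsto (fun j => w (φ j)) Filter.atTop (nhds wbar) := by
      exact ((hcmcont.tendsto laminf).comp hφtend).congr (fun j => hcmw (φ j))
    have hwnorm : ∀ k, r ≤ ‖w k‖ := fun k => hrF _ (hwF k)
    have hwbarnorm : r ≤ ‖wbar‖ :=
      ge_of_tendsto' hwtend.norm (fun j => hwnorm (φ j))
    have hwbne : wbar ≠ 0 := by
      intro h
      rw [h, norm_zero] at hwbarnorm
      exact absurd hwbarnorm (not_le.2 hr)
    have hlaminf0 : ∀ y, 0 ≤ laminf y ∧ laminf y ≤ 1 := by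
      intro y
      have := Set.mem_univ_pi.1 hlaminfK y
      exact ⟨this.1, this.2⟩
    have hlamsumk : ∀ k, ∑ y ∈ T.attach, lam k y = 1 := by
      intro k
      simp only [hlamdef]
      rw [Finset.sum_attach T (ω k)]
      exact hω1 k
    have hlamsum : ∑ y ∈ T.attach, laminf y = 1 := by
      have hsc : Continuous (fun μ : {y // y ∈ T} → ℝ => ∑ y ∈ T.attach, μ y) :=
        continuous_finset_sum _ fun y _ => continuous_apply y
      have h1 : Filter.Tendsto (fun _ : ℕ => (1:ℝ)) Filter.atTop
          (nhds (∑ y ∈ T.attach, laminf y)) :=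
        ((hsc.tendsto laminf).comp hφtend).congr (fun j => hlamsumk (φ j))
      exact (tendsto_nhds_unique tendsto_const_nhds h1).symm
    -- wbar ∈ F via extremality
    have hmemhull : ∀ ν : {y // y ∈ T} → ℝ, (∀ y ∈ T.attach, 0 ≤ ν y) →
        (∑ y ∈ T.attach, ν y) = 1 → cm ν ∈ convexHull ℝ (T : Set (Fin n → ℝ)) := by
      intro ν h0 h1
      have h := Finset.centerMass_mem_convexHull (t := T.attach) (w := ν)
        (z := fun y => (y : Fin n → ℝ)) h0 (h1 ▸ one_pos) (fun y _ => Finset.mem_coe.2 y.2)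
      rwa [Finset.centerMass_eq_of_sum_1 _ _ h1] at h
    have hwbarF : wbar ∈ F := by
      set S : Finset {y // y ∈ T} := T.attach.filter (fun y => 0 < laminf y) with hSdef
      have hev : ∀ᶠ j in Filter.atTop, ∀ y ∈ S, laminf y ≤ 2 * lam (φ j) y := by
        rw [Filter.eventually_all_finset]
        intro y hy
        have hy' : 0 < laminf y := (Finset.mem_filter.1 hy).2
        have hpt : Filter.Tendsto (fun j => lam (φ j) y) Filter.atTop (nhds (laminf y)) :=
          (tendsto_pi_nhds.1 hφtend) y
        have h := hpt.eventually (eventually_gt_nhds (by linarith : laminf y / 2 < laminf y))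
        filter_upwards [h] with j hj
        linarith
      obtain ⟨j₀, hj₀⟩ := hev.exists
      set μ : {y // y ∈ T} → ℝ := fun y => 2 * lam (φ j₀) y - laminf y with hμdef
      have hμ0 : ∀ y ∈ T.attach, 0 ≤ μ y := by
        intro y _
        by_cases hyS : 0 < laminf y
        · have := hj₀ y (Finset.mem_filter.2 ⟨Finset.mem_attach _ _, hyS⟩)
          simp only [hμdef]
          linarith
        · have h0 : laminf y = 0 := le_antisymm (not_lt.1 hyS) (hlaminf0 y).1
          have h1 : 0 ≤ lam (φ j₀) y := (Set.mem_univ_pi.1 (hlamK (φ j₀)) y).1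
          simp only [hμdef, h0]
          linarith
      have hμsum : ∑ y ∈ T.attach, μ y = 1 := by
        simp only [hμdef]
        rw [Finset.sum_sub_distrib, ← Finset.mul_sum, hlamsumk (φ j₀), hlamsum]
        norm_num
      have hybar : cm μ = (2:ℝ) • w (φ j₀) - wbar := by
        rw [hwbardef, ← hcmw (φ j₀)]
        simp only [hcmdef, hμdef]
        rw [Finset.smul_sum, ← Finset.sum_sub_distrib]
        refine Finset.sum_congr rfl fun y _ => ?_
        rw [sub_smul, mul_smul]
      have hwbarQ : wbar ∈ Qs := hhullTQ (hmemhull laminf (fun y _ => (hlaminf0 y).1) hlamsum)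
      have hybarQ : (2:ℝ) • w (φ j₀) - wbar ∈ Qs := by
        rw [← hybar]
        exact hhullTQ (hmemhull μ hμ0 hμsum)
      have hseg : w (φ j₀) ∈ openSegment ℝ wbar ((2:ℝ) • w (φ j₀) - wbar) :=
        ⟨1/2, 1/2, by norm_num, by norm_num, by norm_num, by module⟩
      exact hFface.2 hwbarQ hybarQ (hwF (φ j₀)) hseg
    set ubar : Fin n → ℝ := ‖wbar‖⁻¹ • wbar with hubardef
    have hubar_cone : ubar ∈ cone F :=
      ⟨‖wbar‖⁻¹, inv_pos.2 (norm_pos_iff.2 hwbne), wbar, hwbarF, rfl⟩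
    have hubarne : ubar ≠ 0 := hconene _ hubar_cone
    have hueq' : ∀ k, u k = ‖w k‖⁻¹ • w k := by
      intro k
      have h1 : t k * ‖w k‖ = 1 := by
        have := hun k
        rwa [hueq k, norm_smul, Real.norm_eq_abs, abs_of_pos (ht k)] at this
      have hnw : ‖w k‖ ≠ 0 := (lt_of_lt_of_le hr (hwnorm k)).ne'
      have h2 : t k = ‖w k‖⁻¹ := by
        rw [← one_div, eq_div_iff hnw]
        exact h1
      rw [hueq k, h2]
    have hutend : Filter.Tendsto (fun j => u (φ j)) Filter.atTop (nhds ubar) := by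
      have hcont : ContinuousAt (fun x : Fin n → ℝ => ‖x‖⁻¹ • x) wbar :=
        ContinuousAt.smul (continuousAt_id.norm.inv₀ (norm_ne_zero_iff.2 hwbne)) continuousAt_id
      exact (hcont.tendsto.comp hwtend).congr (fun j => (hueq' (φ j)).symm)
    have hMt : Filter.Tendsto (fun j => M (u (φ j))) Filter.atTop (nhds (M ubar)) :=
      ((hMcont _ hubarne).tendsto).comp hutend
    have hNt : Filter.Tendsto (fun j => N (u (φ j))) Filter.atTop (nhds (N ubar)) :=
      ((hNcont _ hubarne).tendsto).comp hutend
    have h1k : Filter.Tendsto (fun j : ℕ => (1:ℝ)/(φ j + 1)) Filter.atTop (nhds 0) := by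
      refine squeeze_zero (fun j => by positivity) (fun j => ?_)
        tendsto_one_div_add_atTop_nhds_zero_nat
      have hj : (j : ℝ) ≤ (φ j : ℝ) := Nat.cast_le.2 hφmono.le_apply
      exact one_div_le_one_div_of_le (by positivity) (by linarith)
    have hfin : M ubar ≤ N ubar + 0 :=
      le_of_tendsto_of_tendsto' hMt (hNt.add h1k) (fun j => hule (φ j))
    linarith [hgap' ubar hubar_cone]
  -- construct the data
  set m : ℝ := AF.inf' hAF fun β => ‖c β‖ with hmdef
  have hm : 0 < m :=
    (Finset.lt_inf'_iff hAF).2 fun β hβ =>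
      norm_pos_iff.2 (hc β (Finset.filter_subset _ _ hβ))
  set Sc : ℝ := ∑ α ∈ A \ AF, ‖c α‖ with hScdef
  have hSc0 : 0 ≤ Sc := Finset.sum_nonneg fun α _ => norm_nonneg _
  have hUopen : IsOpen {p : Fin n → ℝ | p ≠ 0 ∧ N p + δ * ‖p‖ < M p} := by
    have hcont : ContinuousOn (fun p : Fin n → ℝ => M p - (N p + δ * ‖p‖)) {p : Fin n → ℝ | p ≠ 0} := by
      intro q hq
      exact ((hMcont q hq).sub ((hNcont q hq).add
        ((continuous_const.mul continuous_norm).continuousAt))).continuousWithinAt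
    have h := hcont.isOpen_inter_preimage hopen0 (isOpen_Ioi (a := (0:ℝ)))
    have heq : {p : Fin n → ℝ | p ≠ 0 ∧ N p + δ * ‖p‖ < M p}
        = {p : Fin n → ℝ | p ≠ 0} ∩ (fun p : Fin n → ℝ => M p - (N p + δ * ‖p‖)) ⁻¹' Set.Ioi 0 := by
      ext q
      simp only [Set.mem_setOf_eq, Set.mem_inter_iff, Set.mem_preimage, Set.mem_Ioi, sub_pos]
    rw [heq]
    exact h
  refine ⟨δ, hδ, Sc * m⁻¹ + 1, by positivity,
    {q : (Fin n → ℝ) × (Fin n → ℝ) | q.1 ≠ 0 ∧ N q.1 + δ * ‖q.1‖ < M q.1},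
    hUopen.preimage continuous_fst, fun q hq => hq.1, ?_, ?_, ?_⟩
  · -- conical
    rintro ⟨p, θ⟩ ⟨hp0, hplt⟩ s hs
    refine ⟨smul_ne_zero hs.ne' hp0, ?_⟩
    simp only
    rw [hNh s hs p hp0, hMh s hs p hp0, norm_smul, Real.norm_eq_abs, abs_of_pos hs]
    nlinarith
  · -- contains Λ_F
    rintro ⟨p, θ⟩ ⟨hpc, -⟩
    exact ⟨hconene p hpc, hKEY p hpc⟩
  · -- the estimate
    rintro ⟨p, θ⟩ ⟨hp0, hplt⟩
    simp only
    have hAFsub : AF ⊆ A := Finset.filter_subset _ _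
    have hsplit : Wpot A c (g p) θ - Wpot AF c (g p) θ =
        ∑ α ∈ A \ AF, c α * Complex.exp ((dotZ α (g p) : ℂ)
          + 2 * (Real.pi : ℂ) * Complex.I * (dotZ α θ : ℂ)) := by
      unfold Wpot
      rw [← Finset.sum_sdiff hAFsub]
      ring
    have habs : ∀ α : Fin n → ℤ, ‖c α * Complex.exp ((dotZ α (g p) : ℂ)
        + 2 * (Real.pi : ℂ) * Complex.I * (dotZ α θ : ℂ))‖
        = ‖c α‖ * Real.exp (dotZ α (g p)) := by
      intro α
      rw [norm_mul, Complex.norm_exp]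
      norm_num
    have hMp : Real.exp (M p) ≤ m⁻¹ * ∑ β ∈ AF, ‖c β‖ * Real.exp (dotZ β (g p)) := by
      obtain ⟨β₀, hβ₀, hβeq⟩ := Finset.exists_mem_eq_sup' hAF (fun β => dotZ β (g p))
      have hMeq : M p = dotZ β₀ (g p) := hβeq
      have h1 : m * Real.exp (M p) ≤ ‖c β₀‖ * Real.exp (dotZ β₀ (g p)) := by
        rw [hMeq]
        exact mul_le_mul_of_nonneg_right (Finset.inf'_le _ hβ₀) (Real.exp_pos _).le
      have h2 : ‖c β₀‖ * Real.exp (dotZ β₀ (g p))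
          ≤ ∑ β ∈ AF, ‖c β‖ * Real.exp (dotZ β (g p)) :=
        Finset.single_le_sum (f := fun β => ‖c β‖ * Real.exp (dotZ β (g p)))
          (fun β _ => mul_nonneg (norm_nonneg _) (Real.exp_pos _).le) hβ₀
      have h3 : m * Real.exp (M p) ≤ ∑ β ∈ AF, ‖c β‖ * Real.exp (dotZ β (g p)) :=
        h1.trans h2
      rw [← mul_le_mul_iff_right₀ hm]
      calc m * Real.exp (M p) ≤ ∑ β ∈ AF, ‖c β‖ * Real.exp (dotZ β (g p)) := h3
        _ = m * (m⁻¹ * ∑ β ∈ AF, ‖c β‖ * Real.exp (dotZ β (g p))) := by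
            rw [← mul_assoc, mul_inv_cancel₀ hm.ne', one_mul]
    have hsum0 : 0 ≤ ∑ β ∈ AF, ‖c β‖ * Real.exp (dotZ β (g p)) :=
      Finset.sum_nonneg fun β _ => mul_nonneg (norm_nonneg _) (Real.exp_pos _).le
    calc ‖Wpot A c (g p) θ - Wpot AF c (g p) θ‖
        = ‖∑ α ∈ A \ AF, c α * Complex.exp ((dotZ α (g p) : ℂ)
            + 2 * (Real.pi : ℂ) * Complex.I * (dotZ α θ : ℂ))‖ := by rw [hsplit]
      _ ≤ ∑ α ∈ A \ AF, ‖c α * Complex.exp ((dotZ α (g p) : ℂ)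
            + 2 * (Real.pi : ℂ) * Complex.I * (dotZ α θ : ℂ))‖ := norm_sum_le _ _
      _ = ∑ α ∈ A \ AF, ‖c α‖ * Real.exp (dotZ α (g p)) :=
          Finset.sum_congr rfl fun α _ => habs α
      _ ≤ ∑ α ∈ A \ AF, ‖c α‖ * Real.exp (M p - δ * ‖p‖) := by
          refine Finset.sum_le_sum fun α hα => ?_
          refine mul_le_mul_of_nonneg_left ?_ (norm_nonneg _)
          refine Real.exp_le_exp.2 ?_
          have hle : dotZ α (g p) ≤ N p := Finset.le_sup' (fun α => dotZ α (g p)) hα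
          linarith
      _ = Sc * (Real.exp (-δ * ‖p‖) * Real.exp (M p)) := by
          rw [← Finset.sum_mul, ← Real.exp_add, ← hScdef]
          ring_nf
      _ ≤ Sc * (Real.exp (-δ * ‖p‖) *
            (m⁻¹ * ∑ β ∈ AF, ‖c β‖ * Real.exp (dotZ β (g p)))) := by
          refine mul_le_mul_of_nonneg_left ?_ hSc0
          exact mul_le_mul_of_nonneg_left hMp (Real.exp_pos _).le
      _ ≤ (Sc * m⁻¹ + 1) * Real.exp (-δ * ‖p‖) *
            ∑ β ∈ AF, ‖c β‖ * Real.exp (dotZ β (g p)) := by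
          have hexp : 0 < Real.exp (-δ * ‖p‖) := Real.exp_pos _
          nlinarith [mul_nonneg hexp.le hsum0]

end
end

section
/- Let A ⊂ ℤⁿ be a finite set with 0 in the interior of Q = conv(A), and let g : ℝⁿ∖{0} → ℝⁿ be continuous and positively homogeneous of degree 1 such that for every proper face F of Q and every p ∈ cone(F) one has max_{α ∈ A∖A_F} ⟨α, g(p)⟩ < max_{β ∈ A_F} ⟨β, g(p)⟩. Then for every ε'' ∈ (0, π/2) there exists ε' > 0 such that: for every c : A → ℂ with c_α ≠ 0 and |arg c_α| < ε' for all α ∈ A, there exist an open set V ⊆ (ℝⁿ∖{0}) × ℝⁿ, conical in the first variable and containing the skeleton Λ := ⋃_F {(p, θ) : p ∈ cone(F), ⟨β, θ⟩ ∈ ℤ for all β ∈ A_F} (union over all proper faces F of Q), and a radius R > 0, such that for every (p, θ) ∈ V with ‖p‖ ≥ R the value W(g(p), θ) is nonzero and satisfies |arg W(g(p), θ)| < ε''. -/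
set_option maxHeartbeats 1000000


attribute [local instance] Classical.propDecidable

noncomputable section

/-- The skeleton `Λ = ⋃_F {(p,θ) : p ∈ cone(F), ⟨β,θ⟩ ∈ ℤ ∀ β ∈ A_F}`, the union over
all proper faces `F` of `Q = conv(A)`. -/
def skeleton {n : ℕ} (A : Finset (Fin n → ℤ)) : Set ((Fin n → ℝ) × (Fin n → ℝ)) :=
  {q | ∃ F : Set (Fin n → ℝ),
    IsExtreme ℝ (convexHull ℝ (toR '' (A : Set (Fin n → ℤ)))) F ∧
    F ≠ convexHull ℝ (toR '' (A : Set (Fin n → ℤ))) ∧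
    q.1 ∈ cone F ∧ ∀ β ∈ A, toR β ∈ F → ∃ m : ℤ, dotZ β q.2 = (m : ℝ)}


namespace Stmt5
open Finset Set Filter Topology
variable {n : ℕ}

lemma toR_injective : Function.Injective (toR (n := n)) := by
  intro a b h
  funext i
  have := congrFun h i
  simpa [toR] using this

lemma dotZ_smul (a : Fin n → ℤ) (t : ℝ) (x : Fin n → ℝ) :
    dotZ a (t • x) = t * dotZ a x := by
  simp only [dotZ, Pi.smul_apply, smul_eq_mul, Finset.mul_sum]
  exact Finset.sum_congr rfl fun i _ => by ring

lemma continuous_dotZ (a : Fin n → ℤ) : Continuous (dotZ a) := by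
  unfold dotZ
  exact continuous_finset_sum _ fun i _ => continuous_const.mul (continuous_apply i)

lemma mem_hull_iff (T : Finset (Fin n → ℤ)) (x : Fin n → ℝ) :
    x ∈ convexHull ℝ (toR '' (T : Set (Fin n → ℤ))) ↔
      ∃ w : (Fin n → ℤ) → ℝ, (∀ a, 0 ≤ w a) ∧ ∑ a ∈ T, w a = 1 ∧
        ∑ a ∈ T, w a • toR a = x := by
  constructor
  · intro hx
    rw [show toR '' (T : Set (Fin n → ℤ)) = ((T.image toR : Finset (Fin n → ℝ)) : Set (Fin n → ℝ))
          by simp [Finset.coe_image], Finset.convexHull_eq] at hx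
    obtain ⟨w', hw0, hw1, hwx⟩ := hx
    rw [Finset.centerMass_eq_of_sum_1 _ id hw1] at hwx
    have hinj : ∀ a ∈ T, ∀ b ∈ T, toR a = toR b → a = b := fun a _ b _ h => toR_injective h
    refine ⟨fun a => if a ∈ T then w' (toR a) else 0, ?_, ?_, ?_⟩
    · intro a
      by_cases ha : a ∈ T
      · simpa [ha] using hw0 _ (Finset.mem_image_of_mem toR ha)
      · simp [ha]
    · rw [← hw1, Finset.sum_image hinj]
      exact Finset.sum_congr rfl fun a ha => by simp [ha]
    · rw [← hwx, Finset.sum_image hinj]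
      exact Finset.sum_congr rfl fun a ha => by simp [ha]
  · rintro ⟨w, hw0, hw1, hwx⟩
    have := Finset.centerMass_mem_convexHull T (w := w) (z := toR)
      (fun a _ => hw0 a) (by rw [hw1]; norm_num)
      (fun a ha => Set.mem_image_of_mem toR ha)
    rwa [Finset.centerMass_eq_of_sum_1 _ toR hw1, hwx] at this

def Rep (A : Finset (Fin n → ℤ)) (x : Fin n → ℝ) (w : (Fin n → ℤ) → ℝ) : Prop :=
  (∀ a, 0 ≤ w a) ∧ ∑ a ∈ A, w a = 1 ∧ ∑ a ∈ A, w a • toR a = x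

def Tset (A : Finset (Fin n → ℤ)) (x : Fin n → ℝ) : Finset (Fin n → ℤ) :=
  A.filter fun a => ∃ w, Rep A x w ∧ 0 < w a

lemma Tset_nonempty {A : Finset (Fin n → ℤ)} {x : Fin n → ℝ}
    (hx : x ∈ convexHull ℝ (toR '' (A : Set (Fin n → ℤ)))) : (Tset A x).Nonempty := by
  obtain ⟨w, hw0, hw1, hwx⟩ := (mem_hull_iff A x).mp hx
  have : ∃ a ∈ A, 0 < w a := by
    by_contra h
    push_neg at h
    have : ∑ a ∈ A, w a = 0 :=
      Finset.sum_eq_zero fun a ha => le_antisymm (h a ha) (hw0 a)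
    rw [hw1] at this; norm_num at this
  obtain ⟨a, haA, haw⟩ := this
  exact ⟨a, Finset.mem_filter.mpr ⟨haA, w, ⟨hw0, hw1, hwx⟩, haw⟩⟩

lemma exists_master {A : Finset (Fin n → ℤ)} {x : Fin n → ℝ}
    (hx : x ∈ convexHull ℝ (toR '' (A : Set (Fin n → ℤ)))) :
    ∃ w, Rep A x w ∧ ∀ a ∈ Tset A x, 0 < w a := by
  have hne := Tset_nonempty hx
  have hch : ∀ a : {a // a ∈ Tset A x}, ∃ w, Rep A x w ∧ 0 < w a.1 :=
    fun a => (Finset.mem_filter.mp a.2).2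
  choose wf hwf using hch
  set N : ℝ := ((Tset A x).card : ℝ) with hN
  have hNpos : 0 < N := by
    rw [hN]
    exact_mod_cast Finset.card_pos.mpr hne
  refine ⟨fun b => (∑ a : {a // a ∈ Tset A x}, wf a b) / N, ⟨?_, ?_, ?_⟩, ?_⟩
  · intro b
    exact div_nonneg (Finset.sum_nonneg fun a _ => (hwf a).1.1 b) hNpos.le
  · rw [← Finset.sum_div]
    rw [Finset.sum_comm]
    have : ∀ a : {a // a ∈ Tset A x}, ∑ b ∈ A, wf a b = 1 := fun a => (hwf a).1.2.1
    rw [Finset.sum_congr rfl fun a _ => this a]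
    simp [Fintype.card_coe]
    field_simp
    exact hN.symm
  · have h1 : ∀ b, ((∑ a : {a // a ∈ Tset A x}, wf a b) / N) • toR b
        = N⁻¹ • ∑ a : {a // a ∈ Tset A x}, wf a b • toR b := by
      intro b
      rw [div_eq_mul_inv, mul_comm, mul_smul, ← Finset.sum_smul]
    calc ∑ b ∈ A, ((∑ a : {a // a ∈ Tset A x}, wf a b) / N) • toR b
        = N⁻¹ • ∑ b ∈ A, ∑ a : {a // a ∈ Tset A x}, wf a b • toR b := by
          rw [Finset.smul_sum]; exact Finset.sum_congr rfl fun b _ => h1 b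
      _ = N⁻¹ • ∑ a : {a // a ∈ Tset A x}, ∑ b ∈ A, wf a b • toR b := by
          rw [Finset.sum_comm]
      _ = N⁻¹ • ∑ _a : {a // a ∈ Tset A x}, x := by
          congr 1; exact Finset.sum_congr rfl fun a _ => (hwf a).1.2.2
      _ = x := by
          rw [Finset.sum_const, Finset.card_univ, Fintype.card_coe,
            ← Nat.cast_smul_eq_nsmul ℝ, smul_smul, ← hN,
            inv_mul_cancel₀ hNpos.ne', one_smul]
  · intro a ha
    have h1 : wf ⟨a, ha⟩ a ≤ ∑ a' : {a // a ∈ Tset A x}, wf a' a :=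
      Finset.single_le_sum (fun a' _ => (hwf a').1.1 a) (Finset.mem_univ _)
    exact div_pos (lt_of_lt_of_le (hwf ⟨a, ha⟩).2 h1) hNpos

lemma seg_trick {x y z : Fin n → ℝ} {d : ℝ} (hd : 0 < d) (hz : z = x + d • (x - y)) :
    x ∈ openSegment ℝ y z := by
  have h1d : (0:ℝ) < 1 + d := by linarith
  refine ⟨d/(1+d), 1/(1+d), by positivity, by positivity, by field_simp; ring, ?_⟩
  rw [hz]
  match_scalars <;> field_simp <;> ring

lemma mem_conv_Tset {A : Finset (Fin n → ℤ)} {x : Fin n → ℝ}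
    (hx : x ∈ convexHull ℝ (toR '' (A : Set (Fin n → ℤ)))) :
    x ∈ convexHull ℝ (toR '' ((Tset A x) : Set (Fin n → ℤ))) := by
  obtain ⟨w, hw, hpos⟩ := exists_master hx
  have hzero : ∀ b ∈ A, b ∉ Tset A x → w b = 0 := by
    intro b hbA hbT
    by_contra h
    exact hbT (Finset.mem_filter.mpr ⟨hbA, w, hw, lt_of_le_of_ne (hw.1 b) (Ne.symm h)⟩)
  have hTA : Tset A x ⊆ A := Finset.filter_subset _ A
  refine (mem_hull_iff _ _).mpr ⟨w, hw.1, ?_, ?_⟩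
  · rw [Finset.sum_subset hTA (fun b hb hbT => hzero b hb hbT)]
    exact hw.2.1
  · rw [Finset.sum_subset hTA
      (fun b hb hbT => by rw [hzero b hb hbT, zero_smul])]
    exact hw.2.2

lemma key_subset {A : Finset (Fin n → ℤ)} {F : Set (Fin n → ℝ)} {x : Fin n → ℝ}
    (hF : IsExtreme ℝ (convexHull ℝ (toR '' (A : Set (Fin n → ℤ)))) F) (hxF : x ∈ F) :
    convexHull ℝ (toR '' ((Tset A x) : Set (Fin n → ℤ))) ⊆ F := by
  have hxQ : x ∈ convexHull ℝ (toR '' (A : Set (Fin n → ℤ))) := hF.1 hxF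
  obtain ⟨w, hw, hpos⟩ := exists_master hxQ
  intro y hy
  by_cases hyx : y = x
  · rwa [hyx]
  have hne : (Tset A x).Nonempty := Tset_nonempty hxQ
  obtain ⟨μ, hμ0, hμ1, hμx⟩ := (mem_hull_iff _ _).mp hy
  obtain ⟨a₀, ha₀, hmin⟩ := (Tset A x).exists_min_image w hne
  set m := w a₀ with hm
  have hm0 : 0 < m := hpos a₀ ha₀
  set μ' : (Fin n → ℤ) → ℝ := fun b => if b ∈ Tset A x then μ b else 0 with hμ'
  have hTA : Tset A x ⊆ A := Finset.filter_subset _ A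
  have hμ'1 : ∑ b ∈ A, μ' b = 1 := by
    rw [hμ', Finset.sum_ite_mem, Finset.inter_eq_right.mpr hTA, hμ1]
  have hμ'x : ∑ b ∈ A, μ' b • toR b = y := by
    rw [← hμx]
    simp only [hμ', ite_smul, zero_smul]
    rw [Finset.sum_ite_mem, Finset.inter_eq_right.mpr hTA]
  have hμle1 : ∀ b ∈ Tset A x, μ b ≤ 1 := by
    intro b hb
    rw [← hμ1]
    exact Finset.single_le_sum (fun a _ => hμ0 a) hb
  set lam : (Fin n → ℤ) → ℝ := fun b => (1+m) * w b - m * μ' b with hlam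
  have hlam0 : ∀ b, 0 ≤ lam b := by
    intro b
    by_cases hb : b ∈ Tset A x
    · have h1 : m ≤ w b := hmin b hb
      have h2 : μ' b = μ b := by simp [hμ', hb]
      have h3 : μ b ≤ 1 := hμle1 b hb
      show (0:ℝ) ≤ (1+m) * w b - m * μ' b
      rw [h2]
      nlinarith [hμ0 b]
    · have h2 : μ' b = 0 := by simp [hμ', hb]
      show (0:ℝ) ≤ (1+m) * w b - m * μ' b
      rw [h2]
      nlinarith [hw.1 b]
  set z := x + m • (x - y) with hzdef
  have hz : z ∈ convexHull ℝ (toR '' (A : Set (Fin n → ℤ))) := by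
    refine (mem_hull_iff _ _).mpr ⟨lam, hlam0, ?_, ?_⟩
    · simp only [hlam, Finset.sum_sub_distrib, ← Finset.mul_sum]
      rw [hw.2.1, hμ'1]
      ring
    · have : ∀ b, lam b • toR b = (1+m) • (w b • toR b) - m • (μ' b • toR b) := by
        intro b
        rw [hlam, sub_smul, mul_smul, mul_smul]
      rw [Finset.sum_congr rfl fun b _ => this b, Finset.sum_sub_distrib,
        ← Finset.smul_sum, ← Finset.smul_sum, hw.2.2, hμ'x, hzdef]
      match_scalars <;> ring
  have hyQ : y ∈ convexHull ℝ (toR '' (A : Set (Fin n → ℤ))) :=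
    convexHull_mono (Set.image_mono (f := toR) (by exact_mod_cast hTA)) hy
  exact hF.2 hyQ hz hxF (seg_trick hm0 hzdef)

lemma extreme_not_interior {F Q : Set (Fin n → ℝ)}
    (hF : IsExtreme ℝ Q F) (hFQ : F ≠ Q) : ∀ x ∈ F, x ∉ interior Q := by
  intro x hxF hxint
  apply hFQ
  refine Set.Subset.antisymm hF.1 fun y hy => ?_
  by_cases hyx : y = x
  · rwa [hyx]
  obtain ⟨ε, hε, hball⟩ := Metric.mem_nhds_iff.mp (mem_interior_iff_mem_nhds.mp hxint)
  have hxy : (0:ℝ) < ‖x - y‖ := by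
    rw [norm_pos_iff, sub_ne_zero]
    exact fun h => hyx h.symm
  set d := ε/(2*‖x-y‖) with hd
  have hd0 : 0 < d := by positivity
  set z := x + d • (x - y) with hzdef
  have hz : z ∈ Q := by
    apply hball
    rw [Metric.mem_ball, dist_eq_norm, show z - x = d • (x - y) by rw [hzdef]; abel,
      norm_smul, Real.norm_eq_abs, abs_of_pos hd0]
    have heq : d * ‖x - y‖ = ε / 2 := by rw [hd]; field_simp
    rw [heq]
    linarith
  exact hF.2 hy hz hxF (seg_trick hd0 hzdef)

lemma A_nonempty {A : Finset (Fin n → ℤ)}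
    (hQ : (0 : Fin n → ℝ) ∈ interior (convexHull ℝ (toR '' (A : Set (Fin n → ℤ))))) :
    A.Nonempty := by
  rw [Finset.nonempty_iff_ne_empty]
  rintro rfl
  simp at hQ

lemma combo_gap
    (A : Finset (Fin n → ℤ))
    (hQ : (0 : Fin n → ℝ) ∈ interior (convexHull ℝ (toR '' (A : Set (Fin n → ℤ)))))
    (g : (Fin n → ℝ) → (Fin n → ℝ))
    (hgc : ContinuousOn g {p | p ≠ 0})
    (hgap : ∀ F : Set (Fin n → ℝ),
      IsExtreme ℝ (convexHull ℝ (toR '' (A : Set (Fin n → ℤ)))) F →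
      F ≠ convexHull ℝ (toR '' (A : Set (Fin n → ℤ))) →
      ∀ p ∈ cone F, ∀ α ∈ A, toR α ∉ F →
        ∃ β ∈ A, toR β ∈ F ∧ dotZ α (g p) < dotZ β (g p))
    (α : Fin n → ℤ) (hα : α ∈ A) (B T : Finset (Fin n → ℤ)) :
    ∃ μ : ℝ, 0 < μ ∧ ∀ F : Set (Fin n → ℝ),
      IsExtreme ℝ (convexHull ℝ (toR '' (A : Set (Fin n → ℤ)))) F →
      F ≠ convexHull ℝ (toR '' (A : Set (Fin n → ℤ))) →
      ∀ u ∈ F, toR α ∉ F → (A.filter fun a => toR a ∈ F) = B → Tset A u = T →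
        ∃ β ∈ B, dotZ α (g (‖u‖⁻¹ • u)) + μ ≤ dotZ β (g (‖u‖⁻¹ • u)) := by
  by_contra hcon
  push_neg at hcon
  have hseq : ∀ k : ℕ, ∃ F : Set (Fin n → ℝ),
      IsExtreme ℝ (convexHull ℝ (toR '' (A : Set (Fin n → ℤ)))) F ∧
      F ≠ convexHull ℝ (toR '' (A : Set (Fin n → ℤ))) ∧
      ∃ u, u ∈ F ∧ toR α ∉ F ∧ (A.filter fun a => toR a ∈ F) = B ∧ Tset A u = T ∧
        ∀ β ∈ B, dotZ β (g (‖u‖⁻¹ • u)) < dotZ α (g (‖u‖⁻¹ • u)) + 1/(k+1) := by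
    intro k
    obtain ⟨F, hF1, hF2, u, hu, h3, h4, h5, h6⟩ := hcon (1/(k+1)) (by positivity)
    exact ⟨F, hF1, hF2, u, hu, h3, h4, h5, h6⟩
  choose Fs hFs1 hFs2 us hus hFs3 hFs4 hTs hlt using hseq
  have husQ : ∀ k, us k ∈ convexHull ℝ (toR '' (A : Set (Fin n → ℤ))) :=
    fun k => (hFs1 k).1 (hus k)
  have husT : ∀ k, us k ∈ convexHull ℝ (toR '' (T : Set (Fin n → ℤ))) := by
    intro k
    rw [← hTs k]
    exact mem_conv_Tset (husQ k)
  have hcompact : IsCompact (convexHull ℝ (toR '' (T : Set (Fin n → ℤ)))) :=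
    ((T.finite_toSet).image toR).isCompact_convexHull ℝ
  obtain ⟨u, huT, φ, hφ, htend⟩ := hcompact.tendsto_subseq husT
  obtain ⟨r, hr, hball⟩ := Metric.mem_nhds_iff.mp (mem_interior_iff_mem_nhds.mp hQ)
  have hballint : Metric.ball (0 : Fin n → ℝ) r ⊆
      interior (convexHull ℝ (toR '' (A : Set (Fin n → ℤ)))) :=
    interior_maximal hball Metric.isOpen_ball
  have hnormk : ∀ k, r ≤ ‖us k‖ := by
    intro k
    by_contra h
    push_neg at h
    exact extreme_not_interior (hFs1 k) (hFs2 k) (us k) (hus k)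
      (hballint (mem_ball_zero_iff.mpr h))
  have hnormu : r ≤ ‖u‖ := ge_of_tendsto' htend.norm fun k => hnormk (φ k)
  have hu0 : u ≠ 0 := by
    intro h
    rw [h, norm_zero] at hnormu
    linarith
  have hunorm : (0:ℝ) < ‖u‖ := norm_pos_iff.mpr hu0
  set v := ‖u‖⁻¹ • u with hv
  have hv0 : v ≠ 0 := smul_ne_zero (inv_ne_zero hunorm.ne') hu0
  have htendv : Tendsto (fun k => ‖us (φ k)‖⁻¹ • us (φ k)) atTop (𝓝 v) :=
    (htend.norm.inv₀ hunorm.ne').smul htend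
  have hopen : IsOpen {p : Fin n → ℝ | p ≠ 0} := isOpen_compl_singleton
  have htendg : Tendsto (fun k => g (‖us (φ k)‖⁻¹ • us (φ k))) atTop (𝓝 (g v)) :=
    ((hgc.continuousAt (hopen.mem_nhds hv0)).tendsto).comp htendv
  have hlimle : ∀ β ∈ B, dotZ β (g v) ≤ dotZ α (g v) := by
    intro β hβ
    have h1 : Tendsto (fun k => dotZ β (g (‖us (φ k)‖⁻¹ • us (φ k)))) atTop
        (𝓝 (dotZ β (g v))) := ((continuous_dotZ β).tendsto _).comp htendg
    have h2 : Tendsto (fun k => dotZ α (g (‖us (φ k)‖⁻¹ • us (φ k))) + 1/(φ k + 1 : ℝ))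
        atTop (𝓝 (dotZ α (g v) + 0)) := by
      apply Tendsto.add (((continuous_dotZ α).tendsto _).comp htendg)
      have h3 : Tendsto (fun k : ℕ => 1/(k + 1 : ℝ)) atTop (𝓝 0) :=
        tendsto_one_div_add_atTop_nhds_zero_nat
      exact h3.comp hφ.tendsto_atTop
    rw [add_zero] at h2
    refine le_of_tendsto_of_tendsto' h1 h2 fun k => ?_
    exact_mod_cast (hlt (φ k) β hβ).le
  have huF0 : u ∈ Fs 0 := by
    apply key_subset (hFs1 0) (hus 0)
    rw [hTs 0]
    exact huT
  set Q := convexHull ℝ (toR '' (A : Set (Fin n → ℤ))) with hQdef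
  set Fmin := ⋂₀ {F' : Set (Fin n → ℝ) | IsExtreme ℝ Q F' ∧ F' ≠ Q ∧ u ∈ F'} with hFmin
  have hmemfam : Fs 0 ∈ {F' : Set (Fin n → ℝ) | IsExtreme ℝ Q F' ∧ F' ≠ Q ∧ u ∈ F'} :=
    ⟨hFs1 0, hFs2 0, huF0⟩
  have hFminsub : Fmin ⊆ Fs 0 := Set.sInter_subset_of_mem hmemfam
  have hFminext : IsExtreme ℝ Q Fmin := by
    constructor
    · exact fun x hx => (hFs1 0).1 (hFminsub hx)
    · intro x1 hx1 x2 hx2 x hx hseg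
      exact Set.mem_sInter.mpr fun F' hF' =>
        hF'.1.2 hx1 hx2 (Set.mem_sInter.mp hx F' hF') hseg
  have hFminQ : Fmin ≠ Q := by
    intro h
    have h0Q : (0 : Fin n → ℝ) ∈ Q := interior_subset hQ
    have : (0 : Fin n → ℝ) ∈ Fs 0 := hFminsub (h ▸ h0Q)
    exact extreme_not_interior (hFs1 0) (hFs2 0) 0 this hQ
  have huFmin : u ∈ Fmin := Set.mem_sInter.mpr fun F' hF' => hF'.2.2
  have hvcone : v ∈ cone Fmin := ⟨‖u‖⁻¹, by positivity, u, huFmin, rfl⟩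
  by_cases hαF : toR α ∈ Fmin
  · exact hFs3 0 (hFminsub hαF)
  · obtain ⟨β, hβA, hβF, hβlt⟩ := hgap Fmin hFminext hFminQ v hvcone α hα hαF
    have hβB : β ∈ B := by
      rw [← hFs4 0]
      exact Finset.mem_filter.mpr ⟨hβA, hFminsub hβF⟩
    exact absurd hβlt (not_lt.mpr (hlimle β hβB))

lemma uniform_gap
    (A : Finset (Fin n → ℤ))
    (hQ : (0 : Fin n → ℝ) ∈ interior (convexHull ℝ (toR '' (A : Set (Fin n → ℤ)))))
    (g : (Fin n → ℝ) → (Fin n → ℝ))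
    (hgc : ContinuousOn g {p | p ≠ 0})
    (hgap : ∀ F : Set (Fin n → ℝ),
      IsExtreme ℝ (convexHull ℝ (toR '' (A : Set (Fin n → ℤ)))) F →
      F ≠ convexHull ℝ (toR '' (A : Set (Fin n → ℤ))) →
      ∀ p ∈ cone F, ∀ α ∈ A, toR α ∉ F →
        ∃ β ∈ A, toR β ∈ F ∧ dotZ α (g p) < dotZ β (g p)) :
    ∃ μ : ℝ, 0 < μ ∧ ∀ F : Set (Fin n → ℝ),
      IsExtreme ℝ (convexHull ℝ (toR '' (A : Set (Fin n → ℤ)))) F →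
      F ≠ convexHull ℝ (toR '' (A : Set (Fin n → ℤ))) →
      ∀ u ∈ F, ∀ α ∈ A, toR α ∉ F →
        ∃ β ∈ A, toR β ∈ F ∧ dotZ α (g (‖u‖⁻¹ • u)) + μ ≤ dotZ β (g (‖u‖⁻¹ • u)) := by
  have hA : A.Nonempty := A_nonempty hQ
  have hch : ∀ x : (Fin n → ℤ) × Finset (Fin n → ℤ) × Finset (Fin n → ℤ),
      ∃ μ : ℝ, 0 < μ ∧ (x.1 ∈ A → ∀ F : Set (Fin n → ℝ),
        IsExtreme ℝ (convexHull ℝ (toR '' (A : Set (Fin n → ℤ)))) F →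
        F ≠ convexHull ℝ (toR '' (A : Set (Fin n → ℤ))) →
        ∀ u ∈ F, toR x.1 ∉ F → (A.filter fun a => toR a ∈ F) = x.2.1 → Tset A u = x.2.2 →
          ∃ β ∈ x.2.1, dotZ x.1 (g (‖u‖⁻¹ • u)) + μ ≤ dotZ β (g (‖u‖⁻¹ • u))) := by
    intro x
    by_cases hx : x.1 ∈ A
    · obtain ⟨μ, hμ, h⟩ := combo_gap A hQ g hgc hgap x.1 hx x.2.1 x.2.2
      exact ⟨μ, hμ, fun _ => h⟩
    · exact ⟨1, one_pos, fun h => absurd h hx⟩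
  choose μf hμf0 hμf using hch
  set S : Finset ((Fin n → ℤ) × Finset (Fin n → ℤ) × Finset (Fin n → ℤ)) :=
    A ×ˢ (A.powerset ×ˢ A.powerset) with hS
  have hSne : S.Nonempty := by
    obtain ⟨a, ha⟩ := hA
    exact ⟨(a, ∅, ∅), by simp [hS, ha]⟩
  refine ⟨S.inf' hSne μf, (Finset.lt_inf'_iff hSne).mpr fun x _ => hμf0 x, ?_⟩
  intro F hF hFQ u huF α hα hαF
  have hBx : (α, A.filter fun a => toR a ∈ F, Tset A u) ∈ S := by
    simp only [hS, Finset.mem_product, Finset.mem_powerset]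
    exact ⟨hα, Finset.filter_subset _ _, Finset.filter_subset _ _⟩
  obtain ⟨β, hβB, hβ⟩ := hμf (α, A.filter fun a => toR a ∈ F, Tset A u) hα F hF hFQ u huF hαF rfl rfl
  obtain ⟨hβA, hβF⟩ := Finset.mem_filter.mp hβB
  exact ⟨β, hβA, hβF, le_trans (add_le_add_right (Finset.inf'_le μf hBx) _) hβ⟩

lemma Wterm_eq (cc : ℂ) (x t : ℝ) :
    cc * Complex.exp ((x : ℂ) + 2 * (Real.pi : ℂ) * Complex.I * (t : ℂ)) =
      ((‖cc‖ * Real.exp x : ℝ) : ℂ) *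
        Complex.exp (((cc.arg + 2 * Real.pi * t : ℝ) : ℂ) * Complex.I) := by
  conv_lhs => rw [← Complex.norm_mul_exp_arg_mul_I cc]
  rw [mul_assoc, ← Complex.exp_add, Complex.ofReal_mul, Complex.ofReal_exp]
  conv_rhs => rw [mul_assoc, ← Complex.exp_add]
  congr 1
  push_cast
  ring

lemma Wterm_re (cc : ℂ) (x t : ℝ) :
    (cc * Complex.exp ((x : ℂ) + 2 * (Real.pi : ℂ) * Complex.I * (t : ℂ))).re =
      ‖cc‖ * Real.exp x * Real.cos (cc.arg + 2 * Real.pi * t) := by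
  rw [Wterm_eq, Complex.re_ofReal_mul, Complex.exp_ofReal_mul_I_re]

lemma Wterm_im (cc : ℂ) (x t : ℝ) :
    (cc * Complex.exp ((x : ℂ) + 2 * (Real.pi : ℂ) * Complex.I * (t : ℂ))).im =
      ‖cc‖ * Real.exp x * Real.sin (cc.arg + 2 * Real.pi * t) := by
  rw [Wterm_eq, Complex.im_ofReal_mul, Complex.exp_ofReal_mul_I_im]

lemma Wterm_abs (cc : ℂ) (x t : ℝ) :
    ‖cc * Complex.exp ((x : ℂ) + 2 * (Real.pi : ℂ) * Complex.I * (t : ℂ))‖ =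
      ‖cc‖ * Real.exp x := by
  rw [norm_mul, Complex.norm_exp]
  congr 2
  simp

lemma abs_arg_lt_of_bounds {z : ℂ} {ε : ℝ} (hε : 0 < ε) (hε2 : ε < Real.pi/2)
    (hre : 0 < z.re) (him : |z.im| < z.re * Real.tan ε) : z ≠ 0 ∧ |z.arg| < ε := by
  have hz : z ≠ 0 := by
    intro h
    rw [h, Complex.zero_re] at hre
    exact lt_irrefl 0 hre
  refine ⟨hz, ?_⟩
  have h2 : |z.arg| < Real.pi/2 := Complex.abs_arg_lt_pi_div_two_iff.mpr (Or.inl hre)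
  by_contra h
  push_neg at h
  have htanabs : Real.tan |z.arg| = |z.im| / z.re := by
    have h3 : Real.tan |z.arg| = |Real.tan z.arg| := by
      rcases le_or_gt 0 z.arg with h4 | h4
      · rw [abs_of_nonneg h4, abs_of_nonneg
          (Real.tan_nonneg_of_nonneg_of_le_pi_div_two h4 (by linarith [(abs_lt.mp h2).2]))]
      · rw [abs_of_neg h4, Real.tan_neg, abs_of_nonpos
          (Real.tan_nonpos_of_nonpos_of_neg_pi_div_two_le h4.le
            (by linarith [(abs_lt.mp h2).1]))]
    rw [h3, Complex.tan_arg, abs_div, abs_of_pos hre]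
  have h5 : Real.tan ε ≤ Real.tan |z.arg| := by
    rcases eq_or_lt_of_le h with heq | hlt
    · rw [heq]
    · exact (Real.tan_lt_tan_of_nonneg_of_lt_pi_div_two hε.le h2 hlt).le
  rw [htanabs] at h5
  have h6 : |z.im| / z.re < Real.tan ε := by
    rw [div_lt_iff₀ hre]
    linarith [him]
  linarith


end Stmt5

/-- Let `A ⊂ ℤⁿ` be finite with `0 ∈ int conv(A)` and let `g` be
continuous, positively homogeneous of degree 1, and satisfy the gap condition
`max_{α ∈ A∖A_F}⟨α, g p⟩ < max_{β ∈ A_F}⟨β, g p⟩` along the cone over every proper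
face `F`.  Then for every `ε'' ∈ (0, π/2)` there is `ε' > 0` such that for all nonzero
coefficients with `|arg c_α| < ε'` there are a conical open neighborhood `V` of the
skeleton `Λ` (inside `(ℝⁿ∖{0}) × ℝⁿ`) and `R > 0` with: for `(p,θ) ∈ V`, `‖p‖ ≥ R`,
the value `W(g p, θ)` is nonzero with `|arg W(g p, θ)| < ε''`. -/
theorem stmt_5 (n : ℕ) (hn : 1 ≤ n)
    (A : Finset (Fin n → ℤ))
    (hQ : (0 : Fin n → ℝ) ∈ interior (convexHull ℝ (toR '' (A : Set (Fin n → ℤ)))))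
    (g : (Fin n → ℝ) → (Fin n → ℝ))
    (hgc : ContinuousOn g {p | p ≠ 0})
    (hgh : ∀ t : ℝ, 0 < t → ∀ p : Fin n → ℝ, p ≠ 0 → g (t • p) = t • g p)
    (hgap : ∀ F : Set (Fin n → ℝ),
      IsExtreme ℝ (convexHull ℝ (toR '' (A : Set (Fin n → ℤ)))) F →
      F ≠ convexHull ℝ (toR '' (A : Set (Fin n → ℤ))) →
      ∀ p ∈ cone F, ∀ α ∈ A, toR α ∉ F →
        ∃ β ∈ A, toR β ∈ F ∧ dotZ α (g p) < dotZ β (g p)) :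
    ∀ ε'' : ℝ, 0 < ε'' → ε'' < Real.pi / 2 →
      ∃ ε' : ℝ, 0 < ε' ∧
        ∀ c : (Fin n → ℤ) → ℂ, (∀ α ∈ A, c α ≠ 0 ∧ |(c α).arg| < ε') →
          ∃ V : Set ((Fin n → ℝ) × (Fin n → ℝ)), IsOpen V ∧
            (∀ q ∈ V, q.1 ≠ 0) ∧
            (∀ q ∈ V, ∀ t : ℝ, 0 < t → (t • q.1, q.2) ∈ V) ∧
            skeleton A ⊆ V ∧
            ∃ R : ℝ, 0 < R ∧
              ∀ q ∈ V, R ≤ ‖q.1‖ →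
                Wpot A c (g q.1) q.2 ≠ 0 ∧ |(Wpot A c (g q.1) q.2).arg| < ε'' := by
  intro ε'' hε0 hεlt
  have hπ := Real.pi_pos
  refine ⟨ε''/16, by positivity, ?_⟩
  intro c hc
  obtain ⟨μ, hμ0, hμ⟩ := Stmt5.uniform_gap A hQ g hgc hgap
  have hA : A.Nonempty := Stmt5.A_nonempty hQ
  set η : ℝ := ε''/(32*Real.pi) with hη
  have hη0 : 0 < η := by positivity
  set μ₂ : ℝ := μ/2 with hμ₂
  have hμ₂0 : 0 < μ₂ := by positivity
  set V : Set ((Fin n → ℝ) × (Fin n → ℝ)) :=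
    {q | q.1 ≠ 0 ∧ ∀ α ∈ A, (∃ m : ℤ, |dotZ α q.2 - m| < η) ∨
      ∃ β ∈ A, dotZ α (g q.1) + μ₂ * ‖q.1‖ < dotZ β (g q.1)} with hV
  have hopen0 : IsOpen {q : (Fin n → ℝ) × (Fin n → ℝ) | q.1 ≠ 0} := by
    have : {q : (Fin n → ℝ) × (Fin n → ℝ) | q.1 ≠ 0} =
        Prod.fst ⁻¹' ({0}ᶜ : Set (Fin n → ℝ)) := rfl
    rw [this]
    exact isOpen_compl_singleton.preimage continuous_fst
  have hVopen : IsOpen V := by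
    have hgq : ContinuousOn (fun q : (Fin n → ℝ) × (Fin n → ℝ) => g q.1) {q | q.1 ≠ 0} :=
      hgc.comp continuous_fst.continuousOn (fun q hq => hq)
    have h1 : V = {q : (Fin n → ℝ) × (Fin n → ℝ) | q.1 ≠ 0} ∩
        ⋂ α ∈ A, ((⋃ m : ℤ, {q : (Fin n → ℝ) × (Fin n → ℝ) | |dotZ α q.2 - (m:ℝ)| < η}) ∪
          ⋃ β ∈ A, ({q : (Fin n → ℝ) × (Fin n → ℝ) | q.1 ≠ 0} ∩
            (fun q : (Fin n → ℝ) × (Fin n → ℝ) =>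
              dotZ β (g q.1) - dotZ α (g q.1) - μ₂ * ‖q.1‖) ⁻¹' Set.Ioi 0)) := by
      ext q
      simp only [hV, Set.mem_inter_iff, Set.mem_setOf_eq, Set.mem_iInter, Set.mem_union,
        Set.mem_iUnion, Set.mem_preimage, Set.mem_Ioi]
      constructor
      · rintro ⟨h0, h⟩
        refine ⟨h0, fun α hα => ?_⟩
        rcases h α hα with ⟨m, hm⟩ | ⟨β, hβ, hlt⟩
        · exact Or.inl ⟨m, hm⟩
        · exact Or.inr ⟨β, hβ, h0, by linarith⟩
      · rintro ⟨h0, h⟩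
        refine ⟨h0, fun α hα => ?_⟩
        rcases h α hα with ⟨m, hm⟩ | ⟨β, hβ, _, hlt⟩
        · exact Or.inl ⟨m, hm⟩
        · exact Or.inr ⟨β, hβ, by linarith⟩
    rw [h1]
    refine hopen0.inter (isOpen_biInter_finset fun α hα => ?_)
    refine IsOpen.union (isOpen_iUnion fun m => ?_) (isOpen_biUnion fun β hβ => ?_)
    · exact isOpen_lt (((Stmt5.continuous_dotZ α).comp continuous_snd).sub
        continuous_const).abs continuous_const
    · refine ContinuousOn.isOpen_inter_preimage ?_ hopen0 isOpen_Ioi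
      exact (((Stmt5.continuous_dotZ β).comp_continuousOn hgq).sub
        ((Stmt5.continuous_dotZ α).comp_continuousOn hgq)).sub
        (continuousOn_const.mul (continuous_norm.comp continuous_fst).continuousOn)
  have hne0 : ∀ q ∈ V, q.1 ≠ 0 := fun q hq => hq.1
  have hconical : ∀ q ∈ V, ∀ t : ℝ, 0 < t → ((t • q.1, q.2) ∈ V) := by
    rintro ⟨p, θ⟩ ⟨hp0, hq⟩ t ht
    refine ⟨smul_ne_zero ht.ne' hp0, ?_⟩
    intro α hα
    rcases hq α hα with h1 | ⟨β, hβ, hlt⟩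
    · exact Or.inl h1
    · refine Or.inr ⟨β, hβ, ?_⟩
      have hlt' : dotZ α (g p) + μ₂ * ‖p‖ < dotZ β (g p) := hlt
      show dotZ α (g (t • p)) + μ₂ * ‖t • p‖ < dotZ β (g (t • p))
      rw [hgh t ht p hp0, Stmt5.dotZ_smul, Stmt5.dotZ_smul, norm_smul, Real.norm_eq_abs,
        abs_of_pos ht]
      nlinarith [hlt', ht]
  have hskel : skeleton A ⊆ V := by
    rintro ⟨p, θ⟩ ⟨F, hF, hFQ, ⟨t, ht, u, huF, hpt⟩, hint⟩
    have hu0 : u ≠ 0 := by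
      intro h
      exact Stmt5.extreme_not_interior hF hFQ u huF (h ▸ hQ)
    have hpt' : p = t • u := hpt
    have hp0 : p ≠ 0 := by rw [hpt']; exact smul_ne_zero ht.ne' hu0
    refine ⟨hp0, ?_⟩
    intro α hα
    by_cases hαF : toR α ∈ F
    · obtain ⟨m, hm⟩ := hint α hα hαF
      exact Or.inl ⟨m, by rw [hm]; simpa using hη0⟩
    · obtain ⟨β, hβA, hβF, hineq⟩ := hμ F hF hFQ u huF α hα hαF
      have hupos : (0:ℝ) < ‖u‖ := norm_pos_iff.mpr hu0
      have hppos : (0:ℝ) < ‖p‖ := norm_pos_iff.mpr hp0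
      have hw0 : (‖u‖⁻¹ • u) ≠ 0 := smul_ne_zero (inv_ne_zero hupos.ne') hu0
      have hpw : p = ‖p‖ • (‖u‖⁻¹ • u) := by
        rw [smul_smul, hpt', norm_smul, Real.norm_eq_abs, abs_of_pos ht]
        congr 1
        field_simp
      have hgp : g p = ‖p‖ • g (‖u‖⁻¹ • u) := by
        conv_lhs => rw [hpw]
        exact hgh ‖p‖ hppos _ hw0
      refine Or.inr ⟨β, hβA, ?_⟩
      show dotZ α (g p) + μ₂ * ‖p‖ < dotZ β (g p)
      rw [hgp, Stmt5.dotZ_smul, Stmt5.dotZ_smul]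
      nlinarith [hineq, hppos, hμ0]
  set K := ∑ a ∈ A, ‖c a‖ with hK
  have hcpos : ∀ a ∈ A, 0 < ‖c a‖ := fun a ha => norm_pos_iff.mpr (hc a ha).1
  have hK0 : 0 < K := Finset.sum_pos hcpos hA
  set m₀ := A.inf' hA (fun a => ‖c a‖) with hm₀def
  have hm₀0 : 0 < m₀ := (Finset.lt_inf'_iff hA).mpr hcpos
  set τ := Real.tan ε'' with hτ
  have hτ0 : 0 < τ := Real.tan_pos_of_pos_of_lt_pi_div_two hε0 hεlt
  have hτε : ε'' < τ := Real.lt_tan hε0 hεlt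
  set c₂ := Real.cos (ε''/2) with hc₂
  have hc₂0 : 0 < c₂ := Real.cos_pos_of_mem_Ioo ⟨by linarith, by linarith⟩
  have hc₂1 : c₂ ≤ 1 := Real.cos_le_one _
  have hc₂half : 1/2 ≤ c₂ := by
    have h1 : Real.cos (Real.pi/4) ≤ Real.cos (ε''/2) :=
      Real.cos_le_cos_of_nonneg_of_le_pi (by linarith) (by linarith) (by linarith)
    have h2 : (1:ℝ) ≤ Real.sqrt 2 := by
      rw [show (1:ℝ) = Real.sqrt 1 from (Real.sqrt_one).symm]
      exact Real.sqrt_le_sqrt (by norm_num)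
    rw [Real.cos_pi_div_four] at h1
    rw [hc₂]
    linarith
  set s₂ : ℝ := ε''/8 with hs₂
  have hτc₂ : s₂ < τ * c₂ := by nlinarith
  set ρ := (τ*c₂ - s₂)/(2*(1+τ)) with hρ
  have hρeq : ρ * (2*(1+τ)) = τ*c₂ - s₂ := by rw [hρ]; field_simp
  have hρ0 : 0 < ρ := by rw [hρ]; exact div_pos (by linarith) (by linarith)
  have hρc₂ : ρ ≤ c₂/2 := by nlinarith
  have hkey : s₂ + ρ < τ * (c₂ - ρ) := by nlinarith
  set R := max 1 ((Real.log (K/(ρ*m₀)) + 1)/μ₂) with hR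
  have hR0 : (0:ℝ) < R := lt_of_lt_of_le one_pos (le_max_left _ _)
  have hRexp : K * Real.exp (-(μ₂*R)) ≤ ρ * m₀ := by
    have hX : (0:ℝ) < K/(ρ*m₀) := by positivity
    have h1 : Real.log (K/(ρ*m₀)) + 1 ≤ μ₂ * R := by
      have h2 := le_max_right 1 ((Real.log (K/(ρ*m₀)) + 1)/μ₂)
      have h3 : μ₂ * ((Real.log (K/(ρ*m₀)) + 1)/μ₂) ≤ μ₂ * R :=
        mul_le_mul_of_nonneg_left h2 hμ₂0.le
      rwa [mul_div_cancel₀ _ hμ₂0.ne'] at h3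
    have h2 : K/(ρ*m₀) ≤ Real.exp (μ₂*R) := by
      calc K/(ρ*m₀) = Real.exp (Real.log (K/(ρ*m₀))) := (Real.exp_log hX).symm
        _ ≤ Real.exp (μ₂*R) := Real.exp_le_exp.mpr (by linarith)
    have h4 : K ≤ Real.exp (μ₂*R) * (ρ*m₀) := by
      rw [div_le_iff₀ (by positivity : (0:ℝ) < ρ*m₀)] at h2
      linarith
    rw [mul_comm] at h4
    rw [Real.exp_neg, ← div_eq_mul_inv, div_le_iff₀ (Real.exp_pos _)]
    linarith
  refine ⟨V, hVopen, hne0, hconical, hskel, R, hR0, ?_⟩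
  rintro ⟨p, θ⟩ ⟨hp0', hq⟩ hRp
  have hq' : ∀ α ∈ A, (∃ m : ℤ, |dotZ α θ - m| < η) ∨
      ∃ β ∈ A, dotZ α (g p) + μ₂ * ‖p‖ < dotZ β (g p) := hq
  have hRp' : R ≤ ‖p‖ := hRp
  show Wpot A c (g p) θ ≠ 0 ∧ |(Wpot A c (g p) θ).arg| < ε''
  set x := g p with hx
  obtain ⟨astar, hastarA, hmax⟩ := A.exists_max_image (fun a => dotZ a x) hA
  set M := dotZ astar x with hM
  set N := A.filter (fun a => ∃ m : ℤ, |dotZ a θ - (m:ℝ)| < η) with hN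
  have hNA : N ⊆ A := Finset.filter_subset _ _
  have hpR0 : (0:ℝ) < ‖p‖ := lt_of_lt_of_le hR0 hRp'
  have hastarN : astar ∈ N := by
    rw [hN, Finset.mem_filter]
    refine ⟨hastarA, ?_⟩
    by_contra h
    rcases hq' astar hastarA with h1 | ⟨β, hβ, hlt⟩
    · exact h h1
    · have h2 := hmax β hβ
      linarith [mul_pos hμ₂0 hpR0]
  have hfar : ∀ a ∈ A, a ∉ N → dotZ a x ≤ M - μ₂ * R := by
    intro a ha haN
    rcases hq' a ha with h1 | ⟨β, hβ, hlt⟩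
    · exact absurd (Finset.mem_filter.mpr ⟨ha, h1⟩) haN
    · have h2 := hmax β hβ
      have h3 : μ₂ * R ≤ μ₂ * ‖p‖ := mul_le_mul_of_nonneg_left hRp' hμ₂0.le
      linarith
  set D := ∑ a ∈ N, ‖c a‖ * Real.exp (dotZ a x) with hD
  have hDM : m₀ * Real.exp M ≤ D := by
    have h1 : ‖c astar‖ * Real.exp (dotZ astar x) ≤ D := by
      rw [hD]
      exact Finset.single_le_sum
        (f := fun a => ‖c a‖ * Real.exp (dotZ a x))
        (fun a _ => mul_nonneg (norm_nonneg _) (Real.exp_pos _).le) hastarN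
    have h2 : m₀ ≤ ‖c astar‖ := Finset.inf'_le _ hastarA
    calc m₀ * Real.exp M ≤ ‖c astar‖ * Real.exp M :=
          mul_le_mul_of_nonneg_right h2 (Real.exp_pos M).le
      _ ≤ D := h1
  have hD0 : 0 < D := lt_of_lt_of_le (by positivity) hDM
  have hterm : ∀ a ∈ N, c₂ * (‖c a‖ * Real.exp (dotZ a x)) ≤
      (c a * Complex.exp ((dotZ a x : ℂ) + 2*(Real.pi:ℂ)*Complex.I*(dotZ a θ : ℂ))).re ∧
      |(c a * Complex.exp ((dotZ a x : ℂ) + 2*(Real.pi:ℂ)*Complex.I*(dotZ a θ : ℂ))).im| ≤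
        s₂ * (‖c a‖ * Real.exp (dotZ a x)) := by
    intro a haN
    obtain ⟨haA, m, hm⟩ := Finset.mem_filter.mp haN
    rw [Stmt5.Wterm_re, Stmt5.Wterm_im]
    set w := (c a).arg + 2*Real.pi*(dotZ a θ - m) with hw
    have hshift : (c a).arg + 2*Real.pi*(dotZ a θ) = w + (m:ℝ)*(2*Real.pi) := by
      rw [hw]; push_cast; ring
    have hcosw : Real.cos ((c a).arg + 2*Real.pi*(dotZ a θ)) = Real.cos w := by
      rw [hshift]
      exact_mod_cast Real.cos_add_int_mul_two_pi w m
    have hsinw : Real.sin ((c a).arg + 2*Real.pi*(dotZ a θ)) = Real.sin w := by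
      rw [hshift]
      exact_mod_cast Real.sin_add_int_mul_two_pi w m
    have hargb := (hc a haA).2
    have hwb : |w| ≤ s₂ := by
      rw [hw]
      calc |(c a).arg + 2*Real.pi*(dotZ a θ - m)|
          ≤ |(c a).arg| + |2*Real.pi*(dotZ a θ - m)| := abs_add_le _ _
        _ ≤ ε''/16 + 2*Real.pi*η := by
            have h1 : |2*Real.pi*(dotZ a θ - m)| = 2*Real.pi*|dotZ a θ - m| := by
              rw [abs_mul, abs_of_pos (by positivity : (0:ℝ) < 2*Real.pi)]
            have h2 : 2*Real.pi*|dotZ a θ - m| ≤ 2*Real.pi*η :=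
              mul_le_mul_of_nonneg_left hm.le (by positivity)
            rw [h1]
            linarith [hargb.le]
        _ = s₂ := by
            rw [hη, hs₂]
            field_simp
            ring
    have hs₂pi : s₂ ≤ Real.pi := by rw [hs₂]; linarith
    have hX0 : (0:ℝ) ≤ ‖c a‖ * Real.exp (dotZ a x) := by positivity
    constructor
    · rw [hcosw]
      have h1 : c₂ ≤ Real.cos w := by
        rw [← Real.cos_abs w, hc₂]
        exact Real.cos_le_cos_of_nonneg_of_le_pi (abs_nonneg w) (by linarith)
          (by rw [hs₂] at hwb; linarith)
      calc c₂ * (‖c a‖ * Real.exp (dotZ a x))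
          ≤ Real.cos w * (‖c a‖ * Real.exp (dotZ a x)) :=
            mul_le_mul_of_nonneg_right h1 hX0
        _ = ‖c a‖ * Real.exp (dotZ a x) * Real.cos w := by ring
    · rw [hsinw]
      have keysin : ∀ v : ℝ, 0 ≤ v → v ≤ s₂ → |Real.sin v| ≤ s₂ := by
        intro v h0 hv
        rw [abs_of_nonneg (Real.sin_nonneg_of_nonneg_of_le_pi h0 (by linarith))]
        linarith [Real.sin_le h0]
      have h1 : |Real.sin w| ≤ s₂ := by
        rcases le_or_gt 0 w with h2 | h2
        · exact keysin w h2 (le_trans (le_abs_self w) hwb)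
        · rw [show |Real.sin w| = |Real.sin (-w)| by rw [Real.sin_neg, abs_neg]]
          have h3 : -w ≤ s₂ := by
            rw [abs_of_neg h2] at hwb
            linarith
          exact keysin (-w) (by linarith) h3
      rw [abs_mul, abs_of_nonneg hX0]
      calc ‖c a‖ * Real.exp (dotZ a x) * |Real.sin w|
          ≤ ‖c a‖ * Real.exp (dotZ a x) * s₂ :=
            mul_le_mul_of_nonneg_left h1 hX0
        _ = s₂ * (‖c a‖ * Real.exp (dotZ a x)) := by ring
  set Af := A.filter (fun a => ¬ ∃ m : ℤ, |dotZ a θ - (m:ℝ)| < η) with hAf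
  set Wn := ∑ a ∈ N, c a * Complex.exp ((dotZ a x : ℂ) +
    2*(Real.pi:ℂ)*Complex.I*(dotZ a θ : ℂ)) with hWn
  set Wf := ∑ a ∈ Af, c a * Complex.exp ((dotZ a x : ℂ) +
    2*(Real.pi:ℂ)*Complex.I*(dotZ a θ : ℂ)) with hWf
  have hsplit : Wpot A c x θ = Wn + Wf := by
    rw [hWn, hWf, Wpot, hN, hAf]
    exact (Finset.sum_filter_add_sum_filter_not A _ _).symm
  have hWnre : c₂ * D ≤ Wn.re := by
    rw [hWn, Complex.re_sum, hD, Finset.mul_sum]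
    exact Finset.sum_le_sum fun a ha => (hterm a ha).1
  have hWnim : |Wn.im| ≤ s₂ * D := by
    rw [hWn, Complex.im_sum, hD, Finset.mul_sum]
    exact (Finset.abs_sum_le_sum_abs _ _).trans
      (Finset.sum_le_sum fun a ha => (hterm a ha).2)
  have hWfabs : ‖Wf‖ ≤ ρ * D := by
    rw [hWf]
    have hexpfar : ∀ a ∈ Af, ‖c a‖ * Real.exp (dotZ a x) ≤
        ‖c a‖ * (Real.exp M * Real.exp (-(μ₂*R))) := by
      intro a ha
      obtain ⟨haA, hnot⟩ := Finset.mem_filter.mp ha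
      have haN : a ∉ N := fun h => hnot (Finset.mem_filter.mp h).2
      have h1 : Real.exp (dotZ a x) ≤ Real.exp M * Real.exp (-(μ₂*R)) := by
        rw [← Real.exp_add]
        exact Real.exp_le_exp.mpr (by linarith [hfar a haA haN])
      exact mul_le_mul_of_nonneg_left h1 (norm_nonneg _)
    calc ‖∑ a ∈ Af, c a * Complex.exp ((dotZ a x : ℂ) +
          2*(Real.pi:ℂ)*Complex.I*(dotZ a θ : ℂ))‖
        ≤ ∑ a ∈ Af, ‖c a * Complex.exp ((dotZ a x : ℂ) +
          2*(Real.pi:ℂ)*Complex.I*(dotZ a θ : ℂ))‖ := norm_sum_le _ _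
      _ = ∑ a ∈ Af, ‖c a‖ * Real.exp (dotZ a x) :=
          Finset.sum_congr rfl fun a _ => Stmt5.Wterm_abs _ _ _
      _ ≤ ∑ a ∈ Af, ‖c a‖ * (Real.exp M * Real.exp (-(μ₂*R))) :=
          Finset.sum_le_sum hexpfar
      _ = (∑ a ∈ Af, ‖c a‖) * (Real.exp M * Real.exp (-(μ₂*R))) :=
          (Finset.sum_mul _ _ _).symm
      _ ≤ K * (Real.exp M * Real.exp (-(μ₂*R))) := by
          have h1 : ∑ a ∈ Af, ‖c a‖ ≤ K := by
            rw [hK]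
            exact Finset.sum_le_sum_of_subset_of_nonneg (Finset.filter_subset _ _)
              (fun a _ _ => norm_nonneg _)
          exact mul_le_mul_of_nonneg_right h1 (by positivity)
      _ = (K * Real.exp (-(μ₂*R))) * Real.exp M := by ring
      _ ≤ (ρ * m₀) * Real.exp M :=
          mul_le_mul_of_nonneg_right hRexp (Real.exp_pos M).le
      _ = ρ * (m₀ * Real.exp M) := by ring
      _ ≤ ρ * D := mul_le_mul_of_nonneg_left hDM hρ0.le
  have h1 : -(ρ*D) ≤ Wf.re ∧ Wf.re ≤ ρ*D := by
    have h2 : |Wf.re| ≤ ρ*D := le_trans (Complex.abs_re_le_norm Wf) hWfabs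
    exact abs_le.mp h2
  have hWre : (c₂ - ρ) * D ≤ (Wn + Wf).re := by
    rw [Complex.add_re]
    linarith [hWnre, h1.1]
  have hWre0 : 0 < (Wn + Wf).re := by
    have h3 : 0 < (c₂ - ρ)*D := mul_pos (by linarith) hD0
    linarith
  have hWim : |(Wn + Wf).im| ≤ (s₂ + ρ)*D := by
    rw [Complex.add_im]
    have h2 : |Wf.im| ≤ ρ*D := le_trans (Complex.abs_im_le_norm Wf) hWfabs
    calc |Wn.im + Wf.im| ≤ |Wn.im| + |Wf.im| := abs_add_le _ _
      _ ≤ s₂*D + ρ*D := add_le_add hWnim h2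
      _ = (s₂+ρ)*D := by ring
  have hfinal : |(Wn+Wf).im| < (Wn+Wf).re * Real.tan ε'' := by
    have h2 : (s₂+ρ)*D < τ*((c₂-ρ)*D) := by
      have := mul_lt_mul_of_pos_right hkey hD0
      calc (s₂+ρ)*D < (τ*(c₂-ρ))*D := this
        _ = τ*((c₂-ρ)*D) := by ring
    have h3 : τ*((c₂-ρ)*D) ≤ τ*(Wn+Wf).re := mul_le_mul_of_nonneg_left hWre hτ0.le
    calc |(Wn+Wf).im| ≤ (s₂+ρ)*D := hWim
      _ < τ*((c₂-ρ)*D) := h2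
      _ ≤ τ*(Wn+Wf).re := h3
      _ = (Wn+Wf).re * τ := mul_comm _ _
      _ = (Wn+Wf).re * Real.tan ε'' := by rw [hτ]
  obtain ⟨hne, harg⟩ := Stmt5.abs_arg_lt_of_bounds hε0 hεlt hWre0 hfinal
  rw [hsplit]
  exact ⟨hne, harg⟩

end
end
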